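/- arXiv:2008.13406 — 9 statements merged into one kernel-verified Lean document; each statement's English description precedes it below -/
import Mathlib

section
/- Let w ≥ 2 be a word size, let r1, r2, r3, r4 ≤ w−1 be the rotation constants of the ChaCha quarter round Q, and let 1 ≤ r ≤ w−1 be a rotation amount. For w-bit words x0, x1, x2, x3 with intermediate values b0, b1, b2, b3 and outputs y0, y1, y2, y3 as in the definition of Q, the rotational pair propagates, i.e. (y0 ⋘ r, y1 ⋘ r, y2 ⋘ r, y3 ⋘ r) = Q(x0 ⋘ r, x1 ⋘ r, x2 ⋘ r, x3 ⋘ r), if and only if the following four conditions hold simultaneously: (x0 ⋘ r) ⊞ (x1 ⋘ r) = (x0 ⊞ x1) ⋘ r; (b3 ⋘ r) ⊞ (x2 ⋘ r) = (b3 ⊞ x2) ⋘ r; ((x0 ⊞ x1) ⋘ r) ⊞ (b1 ⋘ r) = (x0 ⊞ x1 ⊞ b1) ⋘ r; and (y3 ⋘ r) ⊞ ((b3 ⊞ x2) ⋘ r) = (y3 ⊞ b3 ⊞ x2) ⋘ r. -/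
lemma modsmall (t w : ℕ) (h : t < 2*w) : (t % w = t ∧ t < w) ∨ (t % w = t - w ∧ w ≤ t) := by
  rcases lt_or_ge t w with h'|h'
  · exact Or.inl ⟨Nat.mod_eq_of_lt h', h'⟩
  · exact Or.inr ⟨by rw [Nat.mod_eq_sub_mod h', Nat.mod_eq_of_lt (by omega)], h'⟩

lemma idx_eq (a b w i : ℕ) (h : i < w) :
    (w - b%w + (w - a%w + i)%w)%w = (w - (a+b)%w + i)%w := by
  have hw : 0 < w := by omega
  have ha : a % w < w := Nat.mod_lt _ hw
  have hb : b % w < w := Nat.mod_lt _ hw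
  have hc : (a + b) % w < w := Nat.mod_lt _ hw
  have hsum : (a % w + b % w) % w = (a+b) % w := (Nat.add_mod a b w).symm
  have h0 := modsmall (a % w + b % w) w (by omega)
  have h1 := modsmall (w - a%w + i) w (by omega)
  have h2 := modsmall (w - b%w + (w - a%w + i)%w) w (by omega)
  have h3 := modsmall (w - (a+b)%w + i) w (by omega)
  omega

lemma getLsbD_rot {w : ℕ} (x : BitVec w) (n i : ℕ) (hi : i < w) :
    (x.rotateLeft n).getLsbD i = x.getLsbD ((w - n % w + i) % w) := by
  have hw : 0 < w := by omega
  have hn : n % w < w := Nat.mod_lt _ hw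
  rw [BitVec.getLsbD_rotateLeft]
  by_cases h : i < n % w
  · have hidx : (w - n % w + i) % w = w - n % w + i := Nat.mod_eq_of_lt (by omega)
    rw [hidx]
    simp [h, hi]
  · have hidx : (w - n % w + i) % w = i - n % w := by
      have := modsmall (w - n%w + i) w (by omega)
      omega
    rw [hidx]
    simp [h, hi]

lemma rot_add {w : ℕ} (x : BitVec w) (a b : ℕ) :
    (x.rotateLeft a).rotateLeft b = x.rotateLeft (a + b) := by
  rcases Nat.eq_zero_or_pos w with rfl | hw
  · apply BitVec.eq_of_getLsbD_eq; intro i hi; exact absurd hi (by omega)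
  apply BitVec.eq_of_getLsbD_eq; intro i hi
  rw [getLsbD_rot _ b i hi, getLsbD_rot _ a _ (Nat.mod_lt _ hw),
      getLsbD_rot _ (a+b) i hi]
  congr 1
  rw [Nat.add_comm a b]
  exact idx_eq b a w i hi

lemma rot_comm {w : ℕ} (x : BitVec w) (a b : ℕ) :
    (x.rotateLeft a).rotateLeft b = (x.rotateLeft b).rotateLeft a := by
  rw [rot_add, rot_add, Nat.add_comm]

lemma rot_xor {w : ℕ} (x y : BitVec w) (n : ℕ) :
    (x ^^^ y).rotateLeft n = x.rotateLeft n ^^^ y.rotateLeft n := by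
  apply BitVec.eq_of_getLsbD_eq; intro i hi
  rw [BitVec.getLsbD_xor, getLsbD_rot _ n i hi, getLsbD_rot _ n i hi,
      getLsbD_rot _ n i hi, BitVec.getLsbD_xor]

lemma rot_zero {w : ℕ} (x : BitVec w) : x.rotateLeft 0 = x := by
  rcases Nat.eq_zero_or_pos w with rfl | hw
  · apply BitVec.eq_of_getLsbD_eq; intro i hi; exact absurd hi (by omega)
  apply BitVec.eq_of_getLsbD_eq; intro i hi
  rw [getLsbD_rot _ 0 i hi]
  congr 1
  have hz : (0:ℕ) % w = 0 := Nat.zero_mod w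
  have : w - 0 % w + i = w + i := by omega
  rw [this, Nat.add_mod_left, Nat.mod_eq_of_lt hi]

lemma rot_inj {w : ℕ} (n : ℕ) {x y : BitVec w} (h : x.rotateLeft n = y.rotateLeft n) :
    x = y := by
  rcases Nat.eq_zero_or_pos w with rfl | hw
  · apply BitVec.eq_of_getLsbD_eq; intro i hi; exact absurd hi (by omega)
  have key : ∀ z : BitVec w, (z.rotateLeft n).rotateLeft (w - n % w) = z := by
    intro z
    rw [rot_add, ← BitVec.rotateLeft_mod_eq_rotateLeft]
    have hn : n % w < w := Nat.mod_lt _ hw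
    have hdm : w * (n / w) + n % w = n := Nat.div_add_mod n w
    have h0 : (n + (w - n % w)) % w = 0 := by
      have he : n + (w - n % w) = w * (n / w) + w := by omega
      rw [he]
      simp [Nat.add_mul_mod_self_left, Nat.mul_mod_right]
    rw [h0, rot_zero]
  rw [← key x, h, key y]

lemma rot_xor_inj {w : ℕ} (s : ℕ) {u v t : BitVec w}
    (h : (u ^^^ t).rotateLeft s = (v ^^^ t).rotateLeft s) : u = v := by
  have h2 := rot_inj s h
  have h3 := congrArg (· ^^^ t) h2
  simpa [BitVec.xor_assoc] using h3

lemma rot_xor_injL {w : ℕ} (s : ℕ) {t u v : BitVec w}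
    (h : (t ^^^ u).rotateLeft s = (t ^^^ v).rotateLeft s) : u = v := by
  have h2 := rot_inj s h
  have h3 := congrArg (t ^^^ ·) h2
  simpa [← BitVec.xor_assoc] using h3

lemma rot_mix {w : ℕ} (u v : BitVec w) (s r : ℕ) :
    ((u ^^^ v).rotateLeft s).rotateLeft r
      = (u.rotateLeft r ^^^ v.rotateLeft r).rotateLeft s := by
  rw [rot_comm, rot_xor]



/-- The ChaCha quarter round with rotation constants `r1, r2, r3, r4`,
acting on quadruples of `w`-bit words. -/
def chachaQR {w : ℕ} (r1 r2 r3 r4 : ℕ)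
    (x : BitVec w × BitVec w × BitVec w × BitVec w) :
    BitVec w × BitVec w × BitVec w × BitVec w :=
  let b0 := x.1 + x.2.1
  let b3 := (b0 ^^^ x.2.2.2).rotateLeft r1
  let b2 := b3 + x.2.2.1
  let b1 := (b2 ^^^ x.2.1).rotateLeft r2
  let y0 := b0 + b1
  let y3 := (y0 ^^^ b3).rotateLeft r3
  let y2 := y3 + b2
  let y1 := (y2 ^^^ b1).rotateLeft r4
  (y0, y1, y2, y3)

theorem chachaQR_rotational_conditions
    (w : ℕ) (hw : 2 ≤ w)
    (r1 r2 r3 r4 : ℕ)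
    (hr1 : r1 ≤ w - 1) (hr2 : r2 ≤ w - 1) (hr3 : r3 ≤ w - 1) (hr4 : r4 ≤ w - 1)
    (r : ℕ) (hr : 1 ≤ r) (hrw : r ≤ w - 1)
    (x0 x1 x2 x3 b0 b1 b2 b3 y0 y1 y2 y3 : BitVec w)
    (hb0 : b0 = x0 + x1)
    (hb3 : b3 = (b0 ^^^ x3).rotateLeft r1)
    (hb2 : b2 = b3 + x2)
    (hb1 : b1 = (b2 ^^^ x1).rotateLeft r2)
    (hy0 : y0 = b0 + b1)
    (hy3 : y3 = (y0 ^^^ b3).rotateLeft r3)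
    (hy2 : y2 = y3 + b2)
    (hy1 : y1 = (y2 ^^^ b1).rotateLeft r4) :
    chachaQR r1 r2 r3 r4
        (x0.rotateLeft r, x1.rotateLeft r, x2.rotateLeft r, x3.rotateLeft r) =
      (y0.rotateLeft r, y1.rotateLeft r, y2.rotateLeft r, y3.rotateLeft r)
    ↔
    (x0.rotateLeft r + x1.rotateLeft r = (x0 + x1).rotateLeft r ∧
     b3.rotateLeft r + x2.rotateLeft r = (b3 + x2).rotateLeft r ∧
     (x0 + x1).rotateLeft r + b1.rotateLeft r = (x0 + x1 + b1).rotateLeft r ∧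
     y3.rotateLeft r + (b3 + x2).rotateLeft r = (y3 + b3 + x2).rotateLeft r) := by
  simp only [chachaQR, Prod.mk.injEq]
  set X0 := x0.rotateLeft r with hX0
  set X1 := x1.rotateLeft r with hX1
  set X2 := x2.rotateLeft r with hX2
  set X3 := x3.rotateLeft r with hX3
  have R3 : y3.rotateLeft r = (y0.rotateLeft r ^^^ b3.rotateLeft r).rotateLeft r3 := by
    rw [hy3, rot_mix]
  have R1 : y1.rotateLeft r = (y2.rotateLeft r ^^^ b1.rotateLeft r).rotateLeft r4 := by
    rw [hy1, rot_mix]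
  have Rb3 : b3.rotateLeft r = (b0.rotateLeft r ^^^ X3).rotateLeft r1 := by
    rw [hb3, rot_mix, hX3]
  have Rb1 : b1.rotateLeft r = (b2.rotateLeft r ^^^ X1).rotateLeft r2 := by
    rw [hb1, rot_mix, hX1]
  constructor
  · rintro ⟨e0, e1, e2, e3⟩
    rw [e0] at e1 e2 e3
    have hB3 := rot_xor_injL r3 (e3.trans R3)
    have hB0 := rot_xor_inj r1 (hB3.trans Rb3)
    rw [hB3] at e0 e1 e2 e3
    rw [e3] at e1 e2
    rw [e2] at e1
    have hB1 := rot_xor_injL r4 (e1.trans R1)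
    have hB2 := rot_xor_inj r2 (hB1.trans Rb1)
    rw [hB1, hB0] at e0
    rw [hB2] at e2
    refine ⟨by rw [← hb0]; exact hB0, by rw [← hb2]; exact hB2, ?_, ?_⟩
    · rw [← hb0, ← hy0]; exact e0
    · rw [BitVec.add_assoc, ← hb2, ← hy2]; exact e2
  · rintro ⟨c1, c2, c3, c4⟩
    have hB0 : X0 + X1 = b0.rotateLeft r := by rw [hb0]; exact c1
    have hB3 : (X0 + X1 ^^^ X3).rotateLeft r1 = b3.rotateLeft r := by
      rw [hB0]; exact Rb3.symm
    have hB2 : b3.rotateLeft r + X2 = b2.rotateLeft r := by rw [hb2]; exact c2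
    have hB1 : (b3.rotateLeft r + X2 ^^^ X1).rotateLeft r2 = b1.rotateLeft r := by
      rw [hB2]; exact Rb1.symm
    have c3' := c3
    rw [← hb0, ← hy0] at c3'
    have c4' := c4
    rw [BitVec.add_assoc, ← hb2, ← hy2] at c4'
    refine ⟨?_, ?_, ?_, ?_⟩
    · rw [hB3, hB1, hB0]; exact c3'
    · rw [hB3, hB1, hB0, c3', hB2, ← R3, c4']; exact R1.symm
    · rw [hB3, hB1, hB0, c3', hB2, ← R3]; exact c4'
    · rw [hB3, hB1, hB0, c3']; exact R3.symm
end

section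
/- Let w ≥ 2 be a word size, let r1, r2, r3, r4 ≤ w−1 be the rotation constants of the ChaCha quarter round Q, and let 1 ≤ r ≤ w−1 be a rotation amount. Suppose the rotational pair propagates through Q on input (x0,x1,x2,x3), i.e. Q(x0 ⋘ r, x1 ⋘ r, x2 ⋘ r, x3 ⋘ r) = (y0 ⋘ r, y1 ⋘ r, y2 ⋘ r, y3 ⋘ r) where (y0,y1,y2,y3) = Q(x0,x1,x2,x3). Then the intermediate values b̃0, b̃1, b̃2, b̃3 computed by Q on the rotated input (x0 ⋘ r, x1 ⋘ r, x2 ⋘ r, x3 ⋘ r) satisfy b̃i = bi ⋘ r for all i = 0, 1, 2, 3, where b0, b1, b2, b3 are the intermediate values computed by Q on (x0,x1,x2,x3). -/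
theorem BitVecAux.rotxor {w : ℕ} (s : ℕ) (a b : BitVec w) :
    (a ^^^ b).rotateLeft s = a.rotateLeft s ^^^ b.rotateLeft s := by
  apply BitVec.eq_of_getLsbD_eq
  intro i hi
  simp only [BitVec.getLsbD_rotateLeft, BitVec.getLsbD_xor]
  by_cases h : (i:ℕ) < s % w <;> simp [h, hi]

theorem BitVecAux.rotcancel {w : ℕ} (s : ℕ) (a : BitVec w) :
    (a.rotateLeft s).rotateRight s = a := by
  rcases Nat.eq_zero_or_pos w with rfl | hw
  · apply Subsingleton.elim
  apply BitVec.eq_of_getLsbD_eq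
  intro i
  have hm : s % w < w := Nat.mod_lt _ hw
  intro hi
  simp only [BitVec.getLsbD_rotateRight, BitVec.getLsbD_rotateLeft]
  by_cases h1 : (i:ℕ) < w - s % w <;>
    by_cases h2 : (s % w + (i:ℕ)) < s % w <;>
    by_cases h3 : ((i:ℕ) - (w - s % w)) < s % w <;>
    simp [h1, h2, h3, hi, -BitVec.getLsbD_eq_getElem] <;> (try congr 1 <;> omega) <;> omega

theorem BitVecAux.rotinj {w s : ℕ} {a b : BitVec w} (h : a.rotateLeft s = b.rotateLeft s) :
    a = b := by
  have := congrArg (·.rotateRight s) h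
  simpa [BitVecAux.rotcancel] using this

set_option maxHeartbeats 1000000 in
theorem BitVecAux.rotcomm {w : ℕ} (s t : ℕ) (a : BitVec w) :
    (a.rotateLeft s).rotateLeft t = (a.rotateLeft t).rotateLeft s := by
  rcases Nat.eq_zero_or_pos w with rfl | hw
  · apply Subsingleton.elim
  apply BitVec.eq_of_getLsbD_eq
  intro i
  have hs : s % w < w := Nat.mod_lt _ hw
  have ht : t % w < w := Nat.mod_lt _ hw
  intro hi
  simp only [BitVec.getLsbD_rotateLeft]
  by_cases h1 : (i:ℕ) < t % w <;>
  by_cases h2 : (i:ℕ) < s % w <;>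
  by_cases h3 : (w - t % w + (i:ℕ)) < s % w <;>
  by_cases h4 : ((i:ℕ) - t % w) < s % w <;>
  by_cases h5 : (w - s % w + (i:ℕ)) < t % w <;>
  by_cases h6 : ((i:ℕ) - s % w) < t % w <;>
  simp only [h1, h2, h3, h4, h5, h6, hi, decide_true, decide_false, cond_true, cond_false,
    eq_self_iff_true, Bool.true_and] <;>
  first
    | rfl
    | omega
    | (congr 1 <;> first
        | omega
        | (simp only [decide_eq_decide]; omega)
        | (congr 1; omega))
    | (congr 2 <;> first
        | omega
        | (simp only [decide_eq_decide]; omega)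
        | (congr 1; omega))
    | (by_cases h7 : w - t % w + i < w <;> by_cases h8 : w - s % w + i < w <;>
        (try simp only [h7, h8, decide_true, decide_false, Bool.true_and, Bool.false_and]) <;>
        first | omega | (congr 1; omega))

theorem BitVecAux.xorinjl {w : ℕ} {u a b : BitVec w} (h : u ^^^ a = u ^^^ b) : a = b := by
  have := congrArg (u ^^^ ·) h
  simpa [← BitVec.xor_assoc] using this

theorem BitVecAux.xorinjr {w : ℕ} {u a b : BitVec w} (h : a ^^^ u = b ^^^ u) : a = b := by
  have := congrArg (· ^^^ u) h
  simpa [BitVec.xor_assoc] using this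

theorem chachaQR_rotational_intermediate
    (w : ℕ) (hw : 2 ≤ w)
    (r1 r2 r3 r4 : ℕ)
    (hr1 : r1 ≤ w - 1) (hr2 : r2 ≤ w - 1) (hr3 : r3 ≤ w - 1) (hr4 : r4 ≤ w - 1)
    (r : ℕ) (hr : 1 ≤ r) (hrw : r ≤ w - 1)
    (x0 x1 x2 x3 b0 b1 b2 b3 y0 y1 y2 y3 : BitVec w)
    -- intermediate values of Q on (x0,x1,x2,x3)
    (hb0 : b0 = x0 + x1)
    (hb3 : b3 = (b0 ^^^ x3).rotateLeft r1)
    (hb2 : b2 = b3 + x2)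
    (hb1 : b1 = (b2 ^^^ x1).rotateLeft r2)
    -- outputs of Q on (x0,x1,x2,x3)
    (hy0 : y0 = b0 + b1)
    (hy3 : y3 = (y0 ^^^ b3).rotateLeft r3)
    (hy2 : y2 = y3 + b2)
    (hy1 : y1 = (y2 ^^^ b1).rotateLeft r4)
    -- intermediate values of Q on the rotated input
    (bt0 bt1 bt2 bt3 : BitVec w)
    (hbt0 : bt0 = x0.rotateLeft r + x1.rotateLeft r)
    (hbt3 : bt3 = (bt0 ^^^ x3.rotateLeft r).rotateLeft r1)
    (hbt2 : bt2 = bt3 + x2.rotateLeft r)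
    (hbt1 : bt1 = (bt2 ^^^ x1.rotateLeft r).rotateLeft r2)
    -- the rotational pair propagates through Q
    (hprop : chachaQR r1 r2 r3 r4
        (x0.rotateLeft r, x1.rotateLeft r, x2.rotateLeft r, x3.rotateLeft r) =
      (y0.rotateLeft r, y1.rotateLeft r, y2.rotateLeft r, y3.rotateLeft r)) :
    bt0 = b0.rotateLeft r ∧ bt1 = b1.rotateLeft r ∧
      bt2 = b2.rotateLeft r ∧ bt3 = b3.rotateLeft r := by
  simp only [chachaQR, Prod.mk.injEq] at hprop
  rw [← hbt0, ← hbt3, ← hbt2, ← hbt1] at hprop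
  obtain ⟨h0, h1', h2', h3'⟩ := hprop
  -- bt3 = b3 ⋘ r
  have hy3r : y3.rotateLeft r = (y0.rotateLeft r ^^^ b3.rotateLeft r).rotateLeft r3 := by
    rw [hy3, BitVecAux.rotcomm, BitVecAux.rotxor]
  rw [h0] at h3'
  have e3 : bt3 = b3.rotateLeft r :=
    BitVecAux.xorinjl (BitVecAux.rotinj (h3'.trans hy3r))
  -- ỹ2 = y2 ⋘ r  (h2' after rewriting)
  rw [h0, e3] at h2' h1'
  -- bt1 = b1 ⋘ r
  have hy1r : y1.rotateLeft r = (y2.rotateLeft r ^^^ b1.rotateLeft r).rotateLeft r4 := by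
    rw [hy1, BitVecAux.rotcomm, BitVecAux.rotxor]
  have hyt2 : (y0.rotateLeft r ^^^ b3.rotateLeft r).rotateLeft r3 + bt2 = y2.rotateLeft r := h2'
  rw [hyt2] at h1'
  have e1 : bt1 = b1.rotateLeft r :=
    BitVecAux.xorinjl (BitVecAux.rotinj (h1'.trans hy1r))
  -- bt2 = b2 ⋘ r
  have hb1r : b1.rotateLeft r = (b2.rotateLeft r ^^^ x1.rotateLeft r).rotateLeft r2 := by
    rw [hb1, BitVecAux.rotcomm, BitVecAux.rotxor]
  have e2 : bt2 = b2.rotateLeft r :=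
    BitVecAux.xorinjr (BitVecAux.rotinj ((hbt1.symm.trans e1).trans hb1r))
  -- bt0 = b0 ⋘ r
  have hb3r : b3.rotateLeft r = (b0.rotateLeft r ^^^ x3.rotateLeft r).rotateLeft r1 := by
    rw [hb3, BitVecAux.rotcomm, BitVecAux.rotxor]
  have e0 : bt0 = b0.rotateLeft r :=
    BitVecAux.xorinjr (BitVecAux.rotinj ((hbt3.symm.trans e3).trans hb3r))
  exact ⟨e0, e1, e2, e3⟩
end

section
/- Let w ≥ 2 be a word size, let r1, r2, r3 ≤ w−1 be fixed, and let 1 ≤ r ≤ w−1 be a rotation amount. For any two choices r4, r4' ≤ w−1 of the fourth rotation constant, denote by Q and Q' the ChaCha quarter rounds with rotation constants (r1,r2,r3,r4) and (r1,r2,r3,r4') respectively. Then for every input (x0,x1,x2,x3), the rotational pair propagates through Q (i.e. Q(x0 ⋘ r, …, x3 ⋘ r) equals the componentwise rotation by r of Q(x0,…,x3)) if and only if it propagates through Q'. In particular, the number of inputs on which a rotational pair propagates through the quarter round does not depend on r4. -/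
instance bitvecFintype {w : ℕ} : Fintype (BitVec w) :=
  Fintype.ofEquiv (Fin (2 ^ w)) ⟨BitVec.ofFin, BitVec.toFin, fun _ => rfl, fun _ => rfl⟩

/-- Componentwise left rotation by `r` of a quadruple of `w`-bit words. -/
def rot4 {w : ℕ} (r : ℕ) (x : BitVec w × BitVec w × BitVec w × BitVec w) :
    BitVec w × BitVec w × BitVec w × BitVec w :=
  (x.1.rotateLeft r, x.2.1.rotateLeft r, x.2.2.1.rotateLeft r, x.2.2.2.rotateLeft r)


lemma getLsbD_rotL {w : ℕ} (hw : 0 < w) (a : BitVec w) (n i : ℕ) (hi : i < w) :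
    (a.rotateLeft n).getLsbD i = a.getLsbD ((i + (w - n % w)) % w) := by
  have hnm : n % w < w := Nat.mod_lt _ hw
  rw [← BitVec.rotateLeft_mod_eq_rotateLeft, BitVec.getLsbD_rotateLeft_of_le hnm]
  rcases Nat.lt_or_ge i (n % w) with hc | hc
  · have h1 : (i + (w - n % w)) % w = w - n % w + i := by
      have : i + (w - n % w) < w := by omega
      rw [Nat.mod_eq_of_lt this]; omega
    simp [hc, h1, Nat.add_comm]
  · have h1 : (i + (w - n % w)) % w = i - n % w := by
      have h2 : i + (w - n % w) = (i - n % w) + w := by omega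
      rw [h2, Nat.add_mod_right, Nat.mod_eq_of_lt (by omega)]
    simp [Nat.not_lt.mpr hc, h1, hi]

lemma rotL_comm {w : ℕ} (a : BitVec w) (m n : ℕ) :
    (a.rotateLeft m).rotateLeft n = (a.rotateLeft n).rotateLeft m := by
  rcases Nat.eq_zero_or_pos w with hw | hw
  · subst hw; exact Subsingleton.elim _ _
  apply BitVec.eq_of_getLsbD_eq
  intro i hi
  rw [getLsbD_rotL hw _ n i hi, getLsbD_rotL hw _ m i hi,
      getLsbD_rotL hw _ m _ (Nat.mod_lt _ hw), getLsbD_rotL hw _ n _ (Nat.mod_lt _ hw)]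
  congr 1
  conv_lhs => rw [Nat.mod_add_mod]
  conv_rhs => rw [Nat.mod_add_mod]
  ring_nf

lemma rotL_inj {w : ℕ} (n : ℕ) {a b : BitVec w} (h : a.rotateLeft n = b.rotateLeft n) : a = b := by
  rcases Nat.eq_zero_or_pos w with hw | hw
  · subst hw; exact Subsingleton.elim _ _
  apply BitVec.eq_of_getLsbD_eq
  intro i hi
  have hj : (i + n % w) % w < w := Nat.mod_lt _ hw
  have h2 := congrArg (fun v => v.getLsbD ((i + n % w) % w)) h
  simp only [getLsbD_rotL hw _ n _ hj] at h2
  have : ((i + n % w) % w + (w - n % w)) % w = i := by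
    rw [Nat.mod_add_mod]
    have : i + n % w + (w - n % w) = i + w := by
      have := Nat.mod_lt n hw; omega
    rw [this, Nat.add_mod_right, Nat.mod_eq_of_lt hi]
  rwa [this] at h2

lemma rotL_cancel {w : ℕ} (n : ℕ) (a b : BitVec w) : a.rotateLeft n = b.rotateLeft n ↔ a = b :=
  ⟨rotL_inj n, fun h => h ▸ rfl⟩

lemma rotL_key {w : ℕ} (X Y : BitVec w) (n r : ℕ) :
    X.rotateLeft n = (Y.rotateLeft n).rotateLeft r ↔ X = Y.rotateLeft r := by
  rw [rotL_comm, rotL_cancel]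

theorem chachaQR_rotational_independent_of_r4
    (w : ℕ) (hw : 2 ≤ w)
    (r1 r2 r3 r4 r4' : ℕ)
    (hr1 : r1 ≤ w - 1) (hr2 : r2 ≤ w - 1) (hr3 : r3 ≤ w - 1)
    (hr4 : r4 ≤ w - 1) (hr4' : r4' ≤ w - 1)
    (r : ℕ) (hr : 1 ≤ r) (hrw : r ≤ w - 1) :
    (∀ x : BitVec w × BitVec w × BitVec w × BitVec w,
      chachaQR r1 r2 r3 r4 (rot4 r x) = rot4 r (chachaQR r1 r2 r3 r4 x) ↔
      chachaQR r1 r2 r3 r4' (rot4 r x) = rot4 r (chachaQR r1 r2 r3 r4' x)) ∧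
    (Finset.univ.filter (fun x : BitVec w × BitVec w × BitVec w × BitVec w =>
        chachaQR r1 r2 r3 r4 (rot4 r x) = rot4 r (chachaQR r1 r2 r3 r4 x))).card =
    (Finset.univ.filter (fun x : BitVec w × BitVec w × BitVec w × BitVec w =>
        chachaQR r1 r2 r3 r4' (rot4 r x) = rot4 r (chachaQR r1 r2 r3 r4' x))).card := by
  have hiff : ∀ x : BitVec w × BitVec w × BitVec w × BitVec w,
      chachaQR r1 r2 r3 r4 (rot4 r x) = rot4 r (chachaQR r1 r2 r3 r4 x) ↔
      chachaQR r1 r2 r3 r4' (rot4 r x) = rot4 r (chachaQR r1 r2 r3 r4' x) := by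
    intro x
    simp only [chachaQR, rot4, Prod.mk.injEq, rotL_key]
  refine ⟨hiff, ?_⟩
  congr 1
  exact Finset.filter_congr fun x _ => by rw [hiff x]
end

section
/- Let w ≥ 2 and let 1 ≤ r ≤ w−1. The number of pairs (a, b) of w-bit words such that (a ⋘ r) ⊞ (b ⋘ r) = (a ⊞ b) ⋘ r equals 2^(w−2) · (2^r + 1) · (2^(w−r) + 1). Equivalently, for a and b independent and uniformly distributed w-bit words, the probability that (a ⋘ r) ⊞ (b ⋘ r) = (a ⊞ b) ⋘ r equals (2^r + 1)(2^(w−r) + 1) / 2^(w+2). -/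
lemma nat_split_inj {R x1 y1 x2 y2 : ℕ} (h1 : y1 < R) (h2 : y2 < R)
    (h : x1 * R + y1 = x2 * R + y2) : x1 = x2 ∧ y1 = y2 := by
  have hy : y1 = y2 := by
    have e1 : (x1 * R + y1) % R = y1 := by
      rw [Nat.add_comm, Nat.add_mul_mod_self_right, Nat.mod_eq_of_lt h1]
    have e2 : (x2 * R + y2) % R = y2 := by
      rw [Nat.add_comm, Nat.add_mul_mod_self_right, Nat.mod_eq_of_lt h2]
    rw [← e1, ← e2, h]
  subst hy
  refine ⟨?_, rfl⟩
  have hx : x1 * R = x2 * R := by omega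
  exact Nat.eq_of_mul_eq_mul_right (by omega) hx

lemma split_lt {R K t u : ℕ} (ht : t < R) (hu : u < K) : t * K + u < R * K := by
  calc t * K + u < t * K + K := by omega
    _ = (t + 1) * K := by ring
    _ ≤ R * K := Nat.mul_le_mul_right K ht

lemma mod_RK {R K t u : ℕ} (ht : t < R) (hu : u < K) : (t * K + u) % (R * K) = t * K + u :=
  Nat.mod_eq_of_lt (split_lt ht hu)

lemma modK {K t u : ℕ} (hu : u < K) : (t * K + u) % K = u := by
  rw [Nat.add_comm, Nat.add_mul_mod_self_right, Nat.mod_eq_of_lt hu]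

lemma divK {K t u : ℕ} (hu : u < K) : (t * K + u) / K = t := by
  rw [Nat.add_comm, Nat.add_mul_div_right _ _ (by omega : 0 < K), Nat.div_eq_of_lt hu,
    Nat.zero_add]

lemma key_iff {R K S0 S1 : ℕ} (hR : 2 ≤ R) (hK : 2 ≤ K) (hS0 : S0 < 2 * K)
    (hS1 : S1 < 2 * R) :
    ((S0 * R + S1) % (R * K) =
       ((S1 * K + S0) % (R * K)) % K * R + ((S1 * K + S0) % (R * K)) / K)
    ↔ (S0 < K ∧ S1 < R) := by
  have hK0 : 0 < K := by omega
  have hR0 : 0 < R := by omega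
  rcases Nat.lt_or_ge S0 K with h0 | h0 <;> rcases Nat.lt_or_ge S1 R with h1 | h1
  · -- case 1: both small; equality holds
    have hM : (S1 * K + S0) % (R * K) = S1 * K + S0 := mod_RK h1 h0
    have hL : (S0 * R + S1) % (R * K) = S0 * R + S1 := by
      rw [Nat.mul_comm R K]; exact mod_RK h0 h1
    rw [hM, hL, modK h0, divK h0]
    simp [h0, h1]
  · -- case 2: S0 < K, S1 ≥ R : fails
    simp only [iff_iff_implies_and_implies]
    refine ⟨fun h => absurd h ?_, fun h => absurd h.2 (by omega)⟩
    obtain ⟨t, ht, rfl⟩ : ∃ t, t < R ∧ S1 = R + t := ⟨S1 - R, by omega, by omega⟩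
    have hM : ((R + t) * K + S0) % (R * K) = t * K + S0 := by
      have : (R + t) * K + S0 = R * K + (t * K + S0) := by ring
      rw [this, Nat.add_mod_left, mod_RK ht h0]
    rw [hM, modK h0, divK h0]
    rcases Nat.lt_or_ge (S0 + 1) K with h2 | h2
    · have hL : (S0 * R + (R + t)) % (R * K) = (S0 + 1) * R + t := by
        have e : S0 * R + (R + t) = (S0 + 1) * R + t := by ring
        rw [e, Nat.mul_comm R K]; exact mod_RK h2 ht
      rw [hL]
      intro h
      have := nat_split_inj ht ht h
      omega
    · have hS0K : S0 + 1 = K := by omega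
      have hL : (S0 * R + (R + t)) % (R * K) = t := by
        have e : S0 * R + (R + t) = (S0 + 1) * R + t := by ring
        rw [e, hS0K, Nat.mul_comm K R, Nat.add_mod_left]
        exact Nat.mod_eq_of_lt (by calc t < R := ht
          _ ≤ R * K := Nat.le_mul_of_pos_right R hK0)
      rw [hL]
      intro h
      have h' : 0 * R + t = S0 * R + t := by omega
      have := nat_split_inj ht ht h'
      omega
  · -- case 3: S0 ≥ K, S1 < R : fails
    simp only [iff_iff_implies_and_implies]
    refine ⟨fun h => absurd h ?_, fun h => absurd h.1 (by omega)⟩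
    obtain ⟨u, hu, rfl⟩ : ∃ u, u < K ∧ S0 = K + u := ⟨S0 - K, by omega, by omega⟩
    have hL : ((K + u) * R + S1) % (R * K) = u * R + S1 := by
      have e : (K + u) * R + S1 = R * K + (u * R + S1) := by ring
      rw [e, Nat.add_mod_left, Nat.mul_comm R K]; exact mod_RK hu h1
    rw [hL]
    rcases Nat.lt_or_ge (S1 + 1) R with h2 | h2
    · have hM : (S1 * K + (K + u)) % (R * K) = (S1 + 1) * K + u := by
        have e : S1 * K + (K + u) = (S1 + 1) * K + u := by ring
        rw [e]; exact mod_RK h2 hu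
      rw [hM, modK hu, divK hu]
      intro h
      have := nat_split_inj h1 (by omega : S1 + 1 < R) h
      omega
    · have hS1R : S1 + 1 = R := by omega
      have hM : (S1 * K + (K + u)) % (R * K) = u := by
        have e : S1 * K + (K + u) = (S1 + 1) * K + u := by ring
        rw [e, hS1R, Nat.add_mod_left]
        exact Nat.mod_eq_of_lt (by calc u < K := hu
          _ ≤ R * K := Nat.le_mul_of_pos_left K hR0)
      rw [hM, Nat.mod_eq_of_lt hu, Nat.div_eq_of_lt hu]
      intro h
      have h' : u * R + S1 = u * R + 0 := by omega
      have := nat_split_inj h1 hR0 h'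
      omega
  · -- case 4: both big : fails
    simp only [iff_iff_implies_and_implies]
    refine ⟨fun h => absurd h ?_, fun h => absurd h.1 (by omega)⟩
    obtain ⟨u, hu, rfl⟩ : ∃ u, u < K ∧ S0 = K + u := ⟨S0 - K, by omega, by omega⟩
    obtain ⟨t, ht, rfl⟩ : ∃ t, t < R ∧ S1 = R + t := ⟨S1 - R, by omega, by omega⟩
    have eM : (R + t) * K + (K + u) = R * K + ((t + 1) * K + u) := by ring
    have eL : (K + u) * R + (R + t) = R * K + ((u + 1) * R + t) := by ring
    rcases Nat.lt_or_ge (t + 1) R with ht2 | ht2 <;> rcases Nat.lt_or_ge (u + 1) K with hu2 | hu2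
    · -- t+1 < R, u+1 < K
      have hM : ((R + t) * K + (K + u)) % (R * K) = (t + 1) * K + u := by
        rw [eM, Nat.add_mod_left, mod_RK ht2 hu]
      have hL : ((K + u) * R + (R + t)) % (R * K) = (u + 1) * R + t := by
        rw [eL, Nat.add_mod_left, Nat.mul_comm R K, mod_RK hu2 ht]
      rw [hM, hL, modK hu, divK hu]
      intro h
      have := nat_split_inj ht (by omega : t + 1 < R) h
      omega
    · -- t+1 < R, u+1 = K
      have hu2' : u + 1 = K := by omega
      have hM : ((R + t) * K + (K + u)) % (R * K) = (t + 1) * K + u := by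
        rw [eM, Nat.add_mod_left, mod_RK ht2 hu]
      have hL : ((K + u) * R + (R + t)) % (R * K) = t := by
        rw [eL, Nat.add_mod_left, Nat.mul_comm R K, hu2', Nat.add_mod_left]
        exact Nat.mod_eq_of_lt (by calc t < R := ht
          _ ≤ K * R := Nat.le_mul_of_pos_left R hK0)
      rw [hM, hL, modK hu, divK hu]
      intro h
      have h' : 0 * R + t = u * R + (t + 1) := by omega
      have := nat_split_inj ht (by omega : t + 1 < R) h'
      omega
    · -- t+1 = R, u+1 < K
      have ht2' : t + 1 = R := by omega
      have hM : ((R + t) * K + (K + u)) % (R * K) = u := by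
        rw [eM, Nat.add_mod_left, ht2', Nat.add_mod_left]
        exact Nat.mod_eq_of_lt (by calc u < K := hu
          _ ≤ R * K := Nat.le_mul_of_pos_left K hR0)
      have hL : ((K + u) * R + (R + t)) % (R * K) = (u + 1) * R + t := by
        rw [eL, Nat.add_mod_left, Nat.mul_comm R K, mod_RK hu2 ht]
      rw [hM, hL, Nat.mod_eq_of_lt hu, Nat.div_eq_of_lt hu]
      intro h
      have h' : (u + 1) * R + t = u * R + 0 := by omega
      have := nat_split_inj ht hR0 h'
      omega
    · -- t+1 = R, u+1 = K
      have ht2' : t + 1 = R := by omega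
      have hu2' : u + 1 = K := by omega
      have hM : ((R + t) * K + (K + u)) % (R * K) = u := by
        rw [eM, Nat.add_mod_left, ht2', Nat.add_mod_left]
        exact Nat.mod_eq_of_lt (by calc u < K := hu
          _ ≤ R * K := Nat.le_mul_of_pos_left K hR0)
      have hL : ((K + u) * R + (R + t)) % (R * K) = t := by
        rw [eL, Nat.add_mod_left, Nat.mul_comm R K, hu2', Nat.add_mod_left]
        exact Nat.mod_eq_of_lt (by calc t < R := ht
          _ ≤ K * R := Nat.le_mul_of_pos_left R hK0)
      rw [hM, hL, Nat.mod_eq_of_lt hu, Nat.div_eq_of_lt hu]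
      intro h
      have h' : 0 * R + t = u * R + 0 := by omega
      have := nat_split_inj ht hR0 h'
      omega


lemma toNat_rot {w r : ℕ} (hrw : r < w) (x : BitVec w) :
    (x.rotateLeft r).toNat = x.toNat % 2 ^ (w - r) * 2 ^ r + x.toNat / 2 ^ (w - r) := by
  rw [BitVec.rotateLeft_eq_rotateLeftAux_of_lt hrw]
  rw [BitVec.rotateLeftAux]
  rw [BitVec.toNat_or, BitVec.toNat_shiftLeft, BitVec.toNat_ushiftRight]
  rw [Nat.shiftLeft_eq, Nat.shiftRight_eq_div_pow]
  have hpow : 2 ^ w = 2 ^ (w - r) * 2 ^ r := by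
    rw [← pow_add]; congr 1; omega
  have h1 : x.toNat * 2 ^ r % 2 ^ w = x.toNat % 2 ^ (w - r) * 2 ^ r := by
    rw [hpow, Nat.mul_mod_mul_right]
  have h2 : x.toNat / 2 ^ (w - r) < 2 ^ r := by
    rw [Nat.div_lt_iff_lt_mul (Nat.two_pow_pos _)]
    calc x.toNat < 2 ^ w := x.isLt
      _ = 2 ^ r * 2 ^ (w - r) := by rw [← pow_add]; congr 1; omega
  rw [h1, Nat.mul_comm (x.toNat % 2 ^ (w - r)) (2 ^ r)]
  rw [← Nat.two_pow_add_eq_or_of_lt h2]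


lemma count_tri (N : ℕ) :
    (Finset.univ.filter (fun p : Fin N × Fin N => (p.1 : ℕ) + (p.2 : ℕ) < N)).card * 2
      = N * (N + 1) := by
  rw [Finset.card_filter, Fintype.sum_prod_type]
  have inner : ∀ x : Fin N,
      (∑ y : Fin N, if (x : ℕ) + (y : ℕ) < N then 1 else 0) = N - (x : ℕ) := by
    intro x
    rw [Fin.sum_univ_eq_sum_range (fun i => if (x : ℕ) + i < N then 1 else 0) N]
    have : ∀ i ∈ Finset.range N,
        (if (x : ℕ) + i < N then (1 : ℕ) else 0) = if i < N - (x : ℕ) then 1 else 0 := by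
      intro i hi
      have : (x : ℕ) + i < N ↔ i < N - (x : ℕ) := by omega
      simp [this]
    rw [Finset.sum_congr rfl this, Finset.sum_boole]
    have : (Finset.range N).filter (fun i => i < N - (x : ℕ)) = Finset.range (N - (x : ℕ)) := by
      ext i
      simp only [Finset.mem_filter, Finset.mem_range]
      omega
    rw [this, Finset.card_range]
    simp
  rw [Finset.sum_congr rfl (fun x _ => inner x)]
  rw [Fin.sum_univ_eq_sum_range (fun i => N - i) N]
  have h1 : (∑ i ∈ Finset.range N, (N - i)) = ∑ i ∈ Finset.range N, (i + 1) := by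
    rw [← Finset.sum_range_reflect]
    refine Finset.sum_congr rfl fun j hj => ?_
    rw [Finset.mem_range] at hj
    omega
  have h2 : (∑ i ∈ Finset.range N, (i + 1)) = ∑ i ∈ Finset.range (N + 1), i := by
    rw [Finset.sum_range_succ' (fun i => i) N]
    simp
  rw [h1, h2, Finset.sum_range_id_mul_two]
  simp [Nat.mul_comm]

lemma cond_iff {w r : ℕ} (hr : 1 ≤ r) (hrw : r < w) (a b : BitVec w) :
    (a.rotateLeft r + b.rotateLeft r = (a + b).rotateLeft r) ↔
    (a.toNat % 2 ^ (w - r) + b.toNat % 2 ^ (w - r) < 2 ^ (w - r) ∧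
     a.toNat / 2 ^ (w - r) + b.toNat / 2 ^ (w - r) < 2 ^ r) := by
  set K := 2 ^ (w - r) with hKdef
  set R := 2 ^ r with hRdef
  have hK : 2 ≤ K := by
    rw [hKdef]; calc 2 = 2 ^ 1 := rfl
      _ ≤ 2 ^ (w - r) := Nat.pow_le_pow_right (by omega) (by omega)
  have hR : 2 ≤ R := by
    rw [hRdef]; calc 2 = 2 ^ 1 := rfl
      _ ≤ 2 ^ r := Nat.pow_le_pow_right (by omega) (by omega)
  have hpow : 2 ^ w = R * K := by
    rw [hRdef, hKdef, ← pow_add]; congr 1; omega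
  set A := a.toNat with hA
  set B := b.toNat with hB
  have hAlt : A < R * K := by rw [← hpow]; exact a.isLt
  have hBlt : B < R * K := by rw [← hpow]; exact b.isLt
  have ha0 : A % K < K := Nat.mod_lt _ (by omega)
  have hb0 : B % K < K := Nat.mod_lt _ (by omega)
  have ha1 : A / K < R := (Nat.div_lt_iff_lt_mul (by omega)).2 hAlt
  have hb1 : B / K < R := (Nat.div_lt_iff_lt_mul (by omega)).2 hBlt
  rw [BitVec.toNat_eq, BitVec.toNat_add, toNat_rot hrw, toNat_rot hrw, toNat_rot hrw,
    BitVec.toNat_add]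
  rw [← hA, ← hB, ← hKdef, ← hRdef, hpow]
  have e1 : A % K * R + A / K + (B % K * R + B / K)
      = (A % K + B % K) * R + (A / K + B / K) := by ring
  have e2 : A + B = (A / K + B / K) * K + (A % K + B % K) := by
    have := Nat.div_add_mod A K
    have := Nat.div_add_mod B K
    nlinarith [Nat.div_add_mod A K, Nat.div_add_mod B K]
  rw [e1, e2]
  exact key_iff hR hK (by omega) (by omega)


def bvSplit {w : ℕ} (R K : ℕ) (hRK : 2 ^ w = R * K) (hK : 0 < K) :
    BitVec w ≃ Fin R × Fin K where
  toFun a := (⟨a.toNat / K, (Nat.div_lt_iff_lt_mul hK).2 (hRK ▸ a.isLt)⟩,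
    ⟨a.toNat % K, Nat.mod_lt _ hK⟩)
  invFun p := BitVec.ofNat w ((p.1 : ℕ) * K + (p.2 : ℕ))
  left_inv a := by
    apply BitVec.eq_of_toNat_eq
    rw [BitVec.toNat_ofNat]
    have e : a.toNat / K * K + a.toNat % K = a.toNat := by
      rw [Nat.mul_comm]; exact Nat.div_add_mod _ _
    rw [e, Nat.mod_eq_of_lt a.isLt]
  right_inv p := by
    have hlt : (p.1 : ℕ) * K + (p.2 : ℕ) < 2 ^ w := by
      rw [hRK]; exact split_lt p.1.isLt p.2.isLt
    have e : (BitVec.ofNat w ((p.1 : ℕ) * K + (p.2 : ℕ))).toNat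
        = (p.1 : ℕ) * K + (p.2 : ℕ) := by
      rw [BitVec.toNat_ofNat, Nat.mod_eq_of_lt hlt]
    ext
    · simp only [e]; exact divK p.2.isLt
    · simp only [e]; exact modK p.2.isLt

theorem rotational_probability_modular_addition
    (w : ℕ) (hw : 2 ≤ w) (r : ℕ) (hr : 1 ≤ r) (hrw : r ≤ w - 1) :
    (Finset.univ.filter (fun p : BitVec w × BitVec w =>
        p.1.rotateLeft r + p.2.rotateLeft r = (p.1 + p.2).rotateLeft r)).card =
      2 ^ (w - 2) * (2 ^ r + 1) * (2 ^ (w - r) + 1) ∧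
    ((Finset.univ.filter (fun p : BitVec w × BitVec w =>
        p.1.rotateLeft r + p.2.rotateLeft r = (p.1 + p.2).rotateLeft r)).card : ℚ)
      / 2 ^ (2 * w)
      = ((2 ^ r + 1) * (2 ^ (w - r) + 1) : ℚ) / 2 ^ (w + 2) := by
  have hrw' : r < w := by omega
  set R := 2 ^ r with hRdef
  set K := 2 ^ (w - r) with hKdef
  have hK0 : 0 < K := Nat.two_pow_pos _
  have hpow : 2 ^ w = R * K := by
    rw [hRdef, hKdef, ← pow_add]; congr 1; omega
  set e := bvSplit R K hpow hK0 with hedef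
  set E : (BitVec w × BitVec w) ≃ ((Fin R × Fin R) × (Fin K × Fin K)) :=
    (Equiv.prodCongr e e).trans (Equiv.prodProdProdComm (Fin R) (Fin K) (Fin R) (Fin K))
    with hEdef
  have hcard1 : (Finset.univ.filter (fun p : BitVec w × BitVec w =>
        p.1.rotateLeft r + p.2.rotateLeft r = (p.1 + p.2).rotateLeft r)).card =
      (Finset.univ.filter (fun q : (Fin R × Fin R) × (Fin K × Fin K) =>
        ((q.1.1 : ℕ) + (q.1.2 : ℕ) < R) ∧ ((q.2.1 : ℕ) + (q.2.2 : ℕ) < K))).card := by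
    apply Finset.card_equiv E
    intro p
    simp only [Finset.mem_filter, Finset.mem_univ, true_and, hEdef, hedef,
      Equiv.trans_apply, Equiv.prodCongr_apply, Equiv.prodProdProdComm_apply,
      Prod.map_fst, Prod.map_snd, bvSplit, Equiv.coe_fn_mk]
    rw [cond_iff hr hrw' p.1 p.2]
    rw [← hRdef, ← hKdef]
    exact and_comm
  have hcard2 : (Finset.univ.filter (fun q : (Fin R × Fin R) × (Fin K × Fin K) =>
        ((q.1.1 : ℕ) + (q.1.2 : ℕ) < R) ∧ ((q.2.1 : ℕ) + (q.2.2 : ℕ) < K))).card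
      = (Finset.univ.filter (fun p : Fin R × Fin R => (p.1 : ℕ) + (p.2 : ℕ) < R)).card *
        (Finset.univ.filter (fun p : Fin K × Fin K => (p.1 : ℕ) + (p.2 : ℕ) < K)).card := by
    rw [← Finset.univ_product_univ,
      Finset.filter_product (fun p : Fin R × Fin R => (p.1 : ℕ) + (p.2 : ℕ) < R)
        (fun p : Fin K × Fin K => (p.1 : ℕ) + (p.2 : ℕ) < K),
      Finset.card_product]
  have hR2 : (Finset.univ.filter (fun p : Fin R × Fin R =>
      (p.1 : ℕ) + (p.2 : ℕ) < R)).card * 2 = R * (R + 1) := count_tri R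
  have hK2 : (Finset.univ.filter (fun p : Fin K × Fin K =>
      (p.1 : ℕ) + (p.2 : ℕ) < K)).card * 2 = K * (K + 1) := count_tri K
  have hfour : 2 ^ (w - 2) * 4 = 2 ^ w := by
    have : (4 : ℕ) = 2 ^ 2 := rfl
    rw [this, ← pow_add]; congr 1; omega
  have hmain : (Finset.univ.filter (fun p : BitVec w × BitVec w =>
        p.1.rotateLeft r + p.2.rotateLeft r = (p.1 + p.2).rotateLeft r)).card =
      2 ^ (w - 2) * (2 ^ r + 1) * (2 ^ (w - r) + 1) := by
    apply Nat.eq_of_mul_eq_mul_right (show 0 < 4 by norm_num)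
    rw [hcard1, hcard2]
    calc (Finset.univ.filter (fun p : Fin R × Fin R => (p.1 : ℕ) + (p.2 : ℕ) < R)).card *
          (Finset.univ.filter (fun p : Fin K × Fin K => (p.1 : ℕ) + (p.2 : ℕ) < K)).card * 4
        = ((Finset.univ.filter (fun p : Fin R × Fin R => (p.1 : ℕ) + (p.2 : ℕ) < R)).card * 2) *
          ((Finset.univ.filter (fun p : Fin K × Fin K => (p.1 : ℕ) + (p.2 : ℕ) < K)).card * 2) := by
          ring
      _ = (R * (R + 1)) * (K * (K + 1)) := by rw [hR2, hK2]
      _ = (R * K) * ((R + 1) * (K + 1)) := by ring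
      _ = 2 ^ w * ((R + 1) * (K + 1)) := by rw [← hpow]
      _ = (2 ^ (w - 2) * 4) * ((R + 1) * (K + 1)) := by rw [hfour]
      _ = 2 ^ (w - 2) * (2 ^ r + 1) * (2 ^ (w - r) + 1) * 4 := by
          rw [← hRdef, ← hKdef]; ring
  refine ⟨hmain, ?_⟩
  rw [hmain]
  push_cast
  have h2w : (2 : ℚ) ^ (2 * w) = 2 ^ (w - 2) * 2 ^ (w + 2) := by
    rw [← pow_add]; congr 1; omega
  rw [h2w]
  have hne1 : (2 : ℚ) ^ (w - 2) ≠ 0 := by positivity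
  have hne2 : (2 : ℚ) ^ (w + 2) ≠ 0 := by positivity
  field_simp
end

section
/- Let w ≥ 2, let 1 ≤ r ≤ w−1, and let a_1, …, a_k be w-bit words. Write each a_i (viewed as an integer in [0, 2^w)) as a_i = a_i^L · 2^(w−r) + a_i^R with 0 ≤ a_i^L ≤ 2^r − 1 and 0 ≤ a_i^R ≤ 2^(w−r) − 1, and set m = ⌊(Σ_{i=1}^k a_i^L) / 2^r⌋ and t = ⌊(Σ_{i=1}^k a_i^R) / 2^(w−r)⌋. Then the equality (a_1 ⋘ r) ⊞ ⋯ ⊞ (a_k ⋘ r) = (a_1 ⊞ ⋯ ⊞ a_k) ⋘ r holds if and only if 2^r divides t and 2^(w−r) divides m. -/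
private lemma and_zero_rot {w r : ℕ} (h : r < w) (x : BitVec w) :
    (x <<< r) &&& (x >>> (w - r)) = 0#w := by
  ext i
  simp only [BitVec.getElem_and, BitVec.getElem_shiftLeft, BitVec.getElem_ushiftRight,
    BitVec.getElem_zero, Bool.and_eq_false_iff]
  rcases Nat.lt_or_ge (i : ℕ) r with hi | hi
  · left; simp [hi]
  · right; apply BitVec.getLsbD_of_ge; omega

lemma toNat_rotl {w r : ℕ} (h : r < w) (x : BitVec w) :
    (x.rotateLeft r).toNat = x.toNat % 2^(w-r) * 2^r + x.toNat / 2^(w-r) := by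
  rw [BitVec.rotateLeft_eq_rotateLeftAux_of_lt h, BitVec.rotateLeftAux,
    ← BitVec.add_eq_or_of_and_eq_zero _ _ (and_zero_rot h x),
    BitVec.toNat_add, BitVec.toNat_shiftLeft, BitVec.toNat_ushiftRight,
    Nat.shiftLeft_eq, Nat.shiftRight_eq_div_pow]
  have hq0 : 0 < 2^(w-r) := Nat.pow_pos (by norm_num)
  have hp0 : 0 < 2^r := Nat.pow_pos (by norm_num)
  have hn : 2^w = 2^(w-r) * 2^r := by rw [← pow_add]; congr 1; omega
  have h1 : x.toNat * 2^r % 2^w = x.toNat % 2^(w-r) * 2^r := by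
    rw [hn]; exact Nat.mul_mod_mul_right _ _ _
  rw [h1]
  have h2 : x.toNat % 2^(w-r) < 2^(w-r) := Nat.mod_lt _ hq0
  have h3 : x.toNat / 2^(w-r) < 2^r := by
    apply Nat.div_lt_of_lt_mul; rw [← hn]; exact x.isLt
  apply Nat.mod_eq_of_lt
  rw [hn]
  calc x.toNat % 2^(w-r) * 2^r + x.toNat / 2^(w-r)
      < x.toNat % 2^(w-r) * 2^r + 2^r := by omega
    _ ≤ 2^(w-r) * 2^r := by nlinarith

lemma mod_helper (p q A c : ℕ) (hp : 0 < p) (hq : 0 < q) (hc : c < q) :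
    (A * q + c) % (p * q) = A % p * q + c := by
  have h1 : A % p < p := Nat.mod_lt _ hp
  have hlt : A % p * q + c < p * q := by nlinarith
  rw [Nat.add_mod, Nat.mul_mod_mul_right, Nat.mod_eq_of_lt (show c < p*q by nlinarith),
    Nat.mod_eq_of_lt hlt]

lemma toNat_sum {w k : ℕ} (v : Fin k → BitVec w) :
    (∑ i, v i).toNat = (∑ i, (v i).toNat) % 2^w := by
  induction k with
  | zero => simp
  | succ n ih =>
    rw [Fin.sum_univ_succ, Fin.sum_univ_succ, BitVec.toNat_add, ih]
    conv_rhs => rw [Nat.add_mod]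
    rw [Nat.mod_eq_of_lt (v 0).isLt]

theorem rotational_sum_iff_carries
    (w : ℕ) (hw : 2 ≤ w) (r : ℕ) (hr : 1 ≤ r) (hrw : r ≤ w - 1)
    (k : ℕ) (a : Fin k → BitVec w)
    (aL aR : Fin k → ℕ)
    (haL : ∀ i, aL i = (a i).toNat / 2 ^ (w - r))
    (haR : ∀ i, aR i = (a i).toNat % 2 ^ (w - r))
    (m t : ℕ)
    (hm : m = (∑ i, aL i) / 2 ^ r)
    (ht : t = (∑ i, aR i) / 2 ^ (w - r)) :
    (∑ i, (a i).rotateLeft r) = (∑ i, a i).rotateLeft r ↔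
      2 ^ r ∣ t ∧ 2 ^ (w - r) ∣ m := by
  have hrw' : r < w := by omega
  set p := 2^r with hp
  set q := 2^(w-r) with hq
  have hp0 : 0 < p := Nat.pow_pos (by norm_num)
  have hq0 : 0 < q := Nat.pow_pos (by norm_num)
  have hn : 2^w = p * q := by rw [hp, hq, ← pow_add]; congr 1; omega
  set SL := ∑ i, aL i with hSL
  set SR := ∑ i, aR i with hSR
  set c := SR % q with hc
  have hcq : c < q := Nat.mod_lt _ hq0
  have hSRd : SR = t * q + c := by rw [ht, hc]; exact (Nat.div_add_mod' _ _).symm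
  have hSLd : SL = m * p + SL % p := by rw [hm]; exact (Nat.div_add_mod' _ _).symm
  have hSLp : SL % p < p := Nat.mod_lt _ hp0
  -- LHS toNat
  have hsum1 : (∑ i, (a i).rotateLeft r).toNat = (c * p + SL) % (q * p) := by
    rw [toNat_sum]
    have h1 : ∀ i : Fin k, ((a i).rotateLeft r).toNat = aR i * p + aL i := by
      intro i; rw [toNat_rotl hrw', haR, haL]
    rw [Finset.sum_congr rfl (fun i _ => h1 i), Finset.sum_add_distrib, ← Finset.sum_mul,
      ← hSR, ← hSL, hn, mul_comm p q]
    conv_lhs => rw [hSRd, add_mul, mul_assoc]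
    rw [add_assoc, mul_comm t (q * p), Nat.mul_add_mod]
  -- sum toNat
  have hS : (∑ i, a i).toNat = (SL + t) % p * q + c := by
    rw [toNat_sum]
    have h1 : ∀ i : Fin k, (a i).toNat = aL i * q + aR i := by
      intro i; rw [haL, haR]; exact (Nat.div_add_mod' _ _).symm
    rw [Finset.sum_congr rfl (fun i _ => h1 i), Finset.sum_add_distrib, ← Finset.sum_mul,
      ← hSR, ← hSL, hn]
    have h2 : SL * q + SR = (SL + t) * q + c := by rw [add_mul]; omega
    rw [h2, mod_helper p q _ c hp0 hq0 hcq]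
  -- RHS toNat
  have hsum2 : ((∑ i, a i).rotateLeft r).toNat = c * p + (SL + t) % p := by
    rw [toNat_rotl hrw', hS, ← hq, ← hp]
    have h1 : ((SL + t) % p * q + c) % q = c := by
      rw [mul_comm, Nat.mul_add_mod, Nat.mod_eq_of_lt hcq]
    have h2 : ((SL + t) % p * q + c) / q = (SL + t) % p := by
      rw [mul_comm, Nat.mul_add_div hq0, Nat.div_eq_of_lt hcq, add_zero]
    rw [h1, h2]
  rw [BitVec.toNat_eq, hsum1, hsum2]
  constructor
  · intro E
    -- mod p both sides
    have hE1 : SL % p = (SL + t) % p := by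
      have hEp := congrArg (· % p) E
      have haux : ∀ y, (c * p + y) % p = y % p := fun y => by
        rw [add_comm, Nat.add_mul_mod_self_right]
      rwa [Nat.mod_mod_of_dvd _ (dvd_mul_left p q), haux, haux, Nat.mod_mod] at hEp
    have hdt : p ∣ t := by
      have h0 : SL + 0 ≡ SL + t [MOD p] := by simpa [Nat.ModEq] using hE1
      exact Nat.modEq_zero_iff_dvd.mp (Nat.ModEq.add_left_cancel' SL h0).symm
    refine ⟨hdt, ?_⟩
    rw [← hE1] at E
    have hL : (c * p + SL) % (q * p) = (c + m) % q * p + SL % p := by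
      conv_lhs => rw [hSLd, ← add_assoc, ← add_mul]
      exact mod_helper q p _ _ hq0 hp0 hSLp
    rw [hL] at E
    have h3 : (c + m) % q = c := Nat.eq_of_mul_eq_mul_right hp0 (by omega)
    have h4 : c + m ≡ c + 0 [MOD q] := by
      simpa [Nat.ModEq, Nat.mod_eq_of_lt hcq] using h3
    exact Nat.modEq_zero_iff_dvd.mp (Nat.ModEq.add_left_cancel' c h4)
  · rintro ⟨hdt, hdm⟩
    obtain ⟨m', rfl⟩ := hdm
    have hE1 : (SL + t) % p = SL % p := by
      obtain ⟨t', rfl⟩ := hdt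
      rw [Nat.add_mul_mod_self_left]
    rw [hE1]
    conv_lhs => rw [hSLd, ← add_assoc, ← add_mul]
    rw [mod_helper q p _ _ hq0 hp0 hSLp]
    congr 2
    rw [mul_comm q m', Nat.add_mul_mod_self_right, Nat.mod_eq_of_lt hcq]
end

section
/- Let w ≥ 2, let 1 ≤ r ≤ w−1, and let k ≥ 1. The number of k-tuples (a_1, …, a_k) of w-bit words such that (a_1 ⋘ r) ⊞ ⋯ ⊞ (a_k ⋘ r) = (a_1 ⊞ ⋯ ⊞ a_k) ⋘ r equals F(r, k, w) · F(w−r, k, w), where for 1 ≤ q ≤ w−1, F(q, k, w) = Σ_{h=0}^{⌊k(2^q − 1)/2^w⌋} Σ_{j=0}^{k} (−1)^j C(k, j) [ C(h·2^w − (j−1)·2^q − 1 + k, h·2^w − (j−1)·2^q − 1) − C(h·2^w − j·2^q − 1 + k, h·2^w − j·2^q − 1) ]. Equivalently, for independent uniformly distributed a_1, …, a_k, the probability of the equality is F(r, k, w) · F(w−r, k, w) / 2^(kw). -/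
/-- Binomial coefficient on integers, equal to `0` when the lower argument is
negative (the upper argument is nonnegative in all occurrences below). -/
def intChoose (n m : ℤ) : ℤ :=
  if 0 ≤ m then ((n.toNat).choose m.toNat : ℤ) else 0

/-- The counting function `F(q, k, w)` from Proposition 2. -/
def Fcount (q k w : ℕ) : ℤ :=
  ∑ h ∈ Finset.range (k * (2 ^ q - 1) / 2 ^ w + 1),
    ∑ j ∈ Finset.range (k + 1),
      (-1 : ℤ) ^ j * (k.choose j : ℤ) *
        (intChoose ((h : ℤ) * 2 ^ w - ((j : ℤ) - 1) * 2 ^ q - 1 + k)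
            ((h : ℤ) * 2 ^ w - ((j : ℤ) - 1) * 2 ^ q - 1) -
         intChoose ((h : ℤ) * 2 ^ w - (j : ℤ) * 2 ^ q - 1 + k)
            ((h : ℤ) * 2 ^ w - (j : ℤ) * 2 ^ q - 1))

namespace RotAux
open Finset

lemma repr_unique {R x y a b : ℕ} (hR : 0 < R) (ha : a < R) (hb : b < R) :
    R * x + a = R * y + b ↔ x = y ∧ a = b := by
  constructor
  · intro h
    have hx : x = y := by
      have h1 := congrArg (· / R) h
      simpa [Nat.mul_add_div hR, Nat.div_eq_of_lt ha, Nat.div_eq_of_lt hb] using h1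
    refine ⟨hx, ?_⟩
    have h2 := congrArg (· % R) h
    simpa [Nat.mul_add_mod, Nat.mod_eq_of_lt ha, Nat.mod_eq_of_lt hb] using h2
  · rintro ⟨rfl, rfl⟩; rfl

lemma add_mod_cancel_iff {A c R : ℕ} : (A + c) % R = A % R ↔ c % R = 0 := by
  constructor
  · intro h
    have h1 : A + c ≡ A + 0 [MOD R] := by simpa [Nat.ModEq] using h
    have := Nat.ModEq.add_left_cancel (Nat.ModEq.refl A) h1
    simpa [Nat.ModEq] using this
  · intro h
    conv_lhs => rw [Nat.add_mod, h, Nat.add_zero]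
    exact Nat.mod_mod_of_dvd A dvd_rfl

lemma mod_mul_lt_iff {A R Q : ℕ} (hR : 0 < R) :
    A % (R * Q) < R ↔ A / R % Q = 0 := by
  rw [Nat.mod_mul]
  constructor
  · intro h
    by_contra hne
    have h1 : 1 ≤ A / R % Q := Nat.pos_of_ne_zero hne
    have h2 : R * 1 ≤ R * (A / R % Q) := Nat.mul_le_mul_left _ h1
    omega
  · intro h
    simp [h, Nat.mod_lt _ hR]

lemma key_equiv (r q A B : ℕ) (hr : 0 < r) (hq : 0 < q) :
    ((2 ^ r * B + A) % 2 ^ (r + q) =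
      ((2 ^ q * A + B) % 2 ^ (r + q)) % 2 ^ q * 2 ^ r +
        ((2 ^ q * A + B) % 2 ^ (r + q)) / 2 ^ q)
    ↔ (A % 2 ^ (r + q) < 2 ^ r ∧ B % 2 ^ (r + q) < 2 ^ q) := by
  have hR : 0 < 2 ^ r := Nat.two_pow_pos r
  have hQ : 0 < 2 ^ q := Nat.two_pow_pos q
  set R := 2 ^ r with hRdef
  set Q := 2 ^ q with hQdef
  have hpowRQ : 2 ^ (r + q) = R * Q := by rw [pow_add]
  have hpowQR : 2 ^ (r + q) = Q * R := by rw [pow_add, Nat.mul_comm]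
  -- compute S := (Q*A + B) % (Q*R)
  have hS : (Q * A + B) % 2 ^ (r + q) = B % Q + Q * ((A + B / Q) % R) := by
    rw [hpowQR, Nat.mod_mul, Nat.mul_add_mod, Nat.mul_add_div hQ]
  have hSmod : (B % Q + Q * ((A + B / Q) % R)) % Q = B % Q := by
    rw [Nat.add_mul_mod_self_left]
    exact Nat.mod_mod_of_dvd B dvd_rfl
  have hSdiv : (B % Q + Q * ((A + B / Q) % R)) / Q = (A + B / Q) % R := by
    rw [Nat.add_mul_div_left _ _ hQ, Nat.div_eq_of_lt (Nat.mod_lt _ hQ), Nat.zero_add]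
  have hL : (R * B + A) % 2 ^ (r + q) = A % R + R * ((B + A / R) % Q) := by
    rw [hpowRQ, Nat.mod_mul, Nat.mul_add_mod, Nat.mul_add_div hR]
  rw [hS, hL, hSmod, hSdiv]
  have hstep : A % R + R * ((B + A / R) % Q) = B % Q * R + (A + B / Q) % R
      ↔ ((B + A / R) % Q = B % Q ∧ A % R = (A + B / Q) % R) := by
    rw [Nat.add_comm (A % R), Nat.mul_comm (B % Q) R]
    exact repr_unique hR (Nat.mod_lt _ hR) (Nat.mod_lt _ hR)
  rw [hstep]
  have e1 : (B + A / R) % Q = B % Q ↔ (A / R) % Q = 0 := add_mod_cancel_iff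
  have e2 : A % R = (A + B / Q) % R ↔ (B / Q) % R = 0 := by
    rw [eq_comm]; exact add_mod_cancel_iff
  have e3 : A % 2 ^ (r + q) < R ↔ A / R % Q = 0 := by
    rw [hpowRQ]; exact mod_mul_lt_iff hR
  have e4 : B % 2 ^ (r + q) < Q ↔ B / Q % R = 0 := by
    rw [hpowQR]; exact mod_mul_lt_iff hQ
  rw [e1, e2, e3, e4, and_comm]

lemma and_shift_eq_zero {w r : ℕ} (x : BitVec w) (hr : r < w) :
    (x <<< r) &&& (x >>> (w - r)) = 0#w := by
  ext i
  simp [BitVec.getLsbD_shiftLeft, BitVec.getLsbD_ushiftRight]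
  intro h1 _
  exact BitVec.getLsbD_of_ge x _ (by omega)

lemma toNat_rotateLeft {w r : ℕ} (hr : r < w) (x : BitVec w) :
    (x.rotateLeft r).toNat = x.toNat % 2 ^ (w - r) * 2 ^ r + x.toNat / 2 ^ (w - r) := by
  have hq : 0 < 2 ^ (w - r) := Nat.two_pow_pos _
  have hR : 0 < 2 ^ r := Nat.two_pow_pos _
  have hpow : 2 ^ w = 2 ^ (w - r) * 2 ^ r := by
    rw [← pow_add]; congr 1; omega
  rw [BitVec.rotateLeft_eq_rotateLeftAux_of_lt hr]
  show (x <<< r ||| x >>> (w - r)).toNat = _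
  rw [← BitVec.add_eq_or_of_and_eq_zero _ _ (and_shift_eq_zero x hr)]
  rw [BitVec.toNat_add, BitVec.toNat_shiftLeft, BitVec.toNat_ushiftRight,
    Nat.shiftLeft_eq, Nat.shiftRight_eq_div_pow]
  have h1 : x.toNat * 2 ^ r % 2 ^ w = x.toNat % 2 ^ (w - r) * 2 ^ r := by
    rw [hpow, Nat.mul_mod_mul_right]
  rw [h1]
  apply Nat.mod_eq_of_lt
  have h2 : x.toNat % 2 ^ (w - r) * 2 ^ r ≤ (2 ^ (w - r) - 1) * 2 ^ r :=
    Nat.mul_le_mul_right _ (by have := Nat.mod_lt x.toNat hq; omega)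
  have h3 : x.toNat / 2 ^ (w - r) < 2 ^ r := by
    apply Nat.div_lt_of_lt_mul
    have := x.isLt
    rw [hpow] at this
    omega
  have h4 : (2 ^ (w - r) - 1) * 2 ^ r + 2 ^ r = 2 ^ w := by
    rw [hpow, Nat.sub_one_mul]
    have : 2 ^ r ≤ 2 ^ (w - r) * 2 ^ r := Nat.le_mul_of_pos_left _ hq
    omega
  omega

lemma toNat_sum {w : ℕ} {ι : Type*} (s : Finset ι) (x : ι → BitVec w) :
    (∑ i ∈ s, x i).toNat = (∑ i ∈ s, (x i).toNat) % 2 ^ w := by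
  induction s using Finset.cons_induction with
  | empty => simp
  | cons a s ha ih =>
    rw [Finset.sum_cons, Finset.sum_cons, BitVec.toNat_add, ih, Nat.add_mod,
      Nat.mod_mod_of_dvd _ dvd_rfl, ← Nat.add_mod]

def cntLe (k m N : ℕ) : ℕ :=
  (univ.filter (fun f : Fin k → Fin m => ∑ i, (f i : ℕ) ≤ N)).card

lemma cntLe_zero (m N : ℕ) : cntLe 0 m N = 1 := by
  rw [cntLe]
  rw [Finset.filter_true_of_mem (fun f _ => by simp)]
  simp

lemma cntLe_succ (k m N : ℕ) :
    cntLe (k + 1) m N = ∑ v : Fin m, (if (v : ℕ) ≤ N then cntLe k m (N - v) else 0) := by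
  rw [cntLe, Finset.card_eq_sum_card_fiberwise (f := fun f => f 0) (t := univ)
    (fun f _ => mem_univ _)]
  refine Finset.sum_congr rfl (fun v _ => ?_)
  rw [Finset.filter_filter]
  by_cases hv : (v : ℕ) ≤ N
  · rw [if_pos hv, cntLe]
    apply Finset.card_nbij' (i := fun f => f ∘ Fin.succ) (j := fun g => Fin.cons v g)
    · intro f hf
      simp only [mem_coe, mem_filter, mem_univ, true_and] at hf ⊢
      obtain ⟨hsum, h0⟩ := hf
      rw [Fin.sum_univ_succ, h0] at hsum
      simp only [Function.comp_apply]
      omega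
    · intro g hg
      simp only [mem_coe, mem_filter, mem_univ, true_and] at hg ⊢
      constructor
      · rw [Fin.sum_univ_succ, Fin.cons_zero]
        simp only [Fin.cons_succ, Function.comp]
        omega
      · exact Fin.cons_zero _ _
    · intro f hf
      simp only [mem_coe, mem_filter, mem_univ, true_and] at hf
      funext i
      dsimp only
      refine Fin.cases ?_ (fun j => ?_) i
      · rw [Fin.cons_zero, hf.2]
      · rw [Fin.cons_succ]; rfl
    · intro g hg
      funext j
      simp [Fin.cons_succ]
  · rw [if_neg hv]
    convert Finset.card_empty
    rw [Finset.filter_eq_empty_iff]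
    intro f _
    simp only [not_and]
    intro hsum h0
    have : (v : ℕ) ≤ ∑ i, (f i : ℕ) := by
      rw [Fin.sum_univ_succ, h0]; omega
    omega

lemma cntLe_unbounded : ∀ k N m : ℕ, N < m → cntLe k m N = (N + k).choose k := by
  intro k
  induction k with
  | zero => intro N m _; simp [cntLe_zero]
  | succ k ih =>
    intro N m hNm
    rw [cntLe_succ]
    rw [← Finset.sum_range (fun v => if v ≤ N then cntLe k m (N - v) else 0)]
    have hsub : range (N + 1) ⊆ range m := by
      rw [Finset.range_subset_range]; omega
    rw [← Finset.sum_subset hsub (fun x _ hx => by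
      rw [if_neg]; simp only [Finset.mem_range] at hx; omega)]
    rw [Finset.sum_congr rfl (fun v hv => by
      rw [if_pos (by simp only [Finset.mem_range] at hv; omega),
        ih (N - v) m (by omega)])]
    rw [← Finset.sum_range_reflect]
    have key : ∑ j ∈ range (N + 1), (N - (N + 1 - 1 - j) + k).choose k
        = (N + k + 1).choose (k + 1) := by
      have h1 : ∀ j ∈ range (N + 1),
          (N - (N + 1 - 1 - j) + k).choose k = (j + k).choose k := fun j hj => by
        simp only [Finset.mem_range] at hj
        congr 1
        omega
      rw [Finset.sum_congr rfl h1]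
      have h2 : Icc k (N + k) = (Icc 0 N).map (addRightEmbedding k) := by
        rw [Finset.map_add_right_Icc]
        congr 1
        omega
      rw [Finset.range_eq_Ico, Finset.Ico_add_one_right_eq_Icc, ← Nat.sum_Icc_choose (N + k) k, h2,
        Finset.sum_map]
      rfl
    rw [key, Nat.add_assoc]

lemma forced_count (k m N : ℕ) (hm : 0 < m) (S : Finset (Fin k)) :
    ((univ.filter (fun f : Fin k → Fin (N + m + 1) =>
        (∑ i, (f i : ℕ)) ≤ N ∧ ∀ i ∈ S, m ≤ (f i : ℕ))).card : ℤ)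
    = if S.card * m ≤ N then ((N - S.card * m + k).choose k : ℤ) else 0 := by
  set M := N + m + 1 with hM
  by_cases hSm : S.card * m ≤ N
  · rw [if_pos hSm]
    have hcard : (univ.filter (fun f : Fin k → Fin M =>
        (∑ i, (f i : ℕ)) ≤ N ∧ ∀ i ∈ S, m ≤ (f i : ℕ))).card
        = cntLe k M (N - S.card * m) := by
      rw [cntLe]
      have hSsum : ∑ x, (if x ∈ S then m else 0) = S.card * m := by
        rw [Finset.sum_ite_mem, Finset.univ_inter, Finset.sum_const, smul_eq_mul]
      have hval : ∀ g : Fin k → Fin M, (∑ x, (g x : ℕ)) ≤ N - S.card * m →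
          ∀ x, (g x : ℕ) + (if x ∈ S then m else 0) < M := by
        intro g hg x
        have h1 : (g x : ℕ) ≤ ∑ y, (g y : ℕ) :=
          Finset.single_le_sum (f := fun y => (g y : ℕ)) (fun i _ => Nat.zero_le _)
            (mem_univ x)
        split <;> omega
      apply Finset.card_nbij'
        (i := fun f x => (⟨(f x : ℕ) - (if x ∈ S then m else 0), by
          have := (f x).isLt; split <;> omega⟩ : Fin M))
        (j := fun g x => (⟨((g x : ℕ) + (if x ∈ S then m else 0)) % M, by
          apply Nat.mod_lt; omega⟩ : Fin M))
      · intro f hf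
        simp only [mem_coe, mem_filter, mem_univ, true_and] at hf ⊢
        obtain ⟨hsum, hforce⟩ := hf
        have h1 : ∑ x, ((f x : ℕ) - (if x ∈ S then m else 0))
            + ∑ x, (if x ∈ S then m else 0) = ∑ x, (f x : ℕ) := by
          rw [← Finset.sum_add_distrib]
          refine Finset.sum_congr rfl (fun x _ => ?_)
          by_cases hx : x ∈ S
          · have := hforce x hx; simp [hx]; omega
          · simp [hx]
        rw [hSsum] at h1
        omega
      · intro g hg
        simp only [mem_coe, mem_filter, mem_univ, true_and] at hg ⊢
        have hmods : ∀ x, ((g x : ℕ) + (if x ∈ S then m else 0)) % M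
            = (g x : ℕ) + (if x ∈ S then m else 0) :=
          fun x => Nat.mod_eq_of_lt (hval g hg x)
        have h1 : ∑ x, (((g x : ℕ) + (if x ∈ S then m else 0)) % M)
            = ∑ x, (g x : ℕ) + S.card * m := by
          rw [Finset.sum_congr rfl (fun x _ => hmods x), Finset.sum_add_distrib, hSsum]
        constructor
        · rw [h1]; omega
        · intro i hi
          rw [hmods i]
          simp [hi]
      · intro f hf
        simp only [mem_coe, mem_filter, mem_univ, true_and] at hf
        obtain ⟨hsum, hforce⟩ := hf
        funext x
        apply Fin.ext
        simp only
        have hle : (if x ∈ S then m else 0) ≤ (f x : ℕ) := by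
          by_cases hx : x ∈ S
          · simpa [hx] using hforce x hx
          · simp [hx]
        have hfx := (f x).isLt
        rw [Nat.mod_eq_of_lt (by omega)]
        omega
      · intro g hg
        simp only [mem_coe, mem_filter, mem_univ, true_and] at hg
        funext x
        apply Fin.ext
        simp only
        rw [Nat.mod_eq_of_lt (hval g hg x)]
        split <;> omega
    have hlt : N - S.card * m < M := by clear hcard; omega
    rw [hcard]
    rw [cntLe_unbounded k (N - S.card * m) M hlt]
  · rw [if_neg hSm]
    norm_cast
    rw [Finset.card_eq_zero, Finset.filter_eq_empty_iff]
    intro f _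
    rintro ⟨hsum, hforce⟩
    have h1 : S.card * m ≤ ∑ x ∈ S, (f x : ℕ) := by
      calc S.card * m = ∑ _x ∈ S, m := by rw [Finset.sum_const, smul_eq_mul]
      _ ≤ ∑ x ∈ S, (f x : ℕ) := Finset.sum_le_sum (fun x hx => hforce x hx)
    have h2 : ∑ x ∈ S, (f x : ℕ) ≤ ∑ x, (f x : ℕ) :=
      Finset.sum_le_sum_of_subset (Finset.subset_univ S)
    omega

lemma cntLe_transfer (k m N : ℕ) (hm : 0 < m) :
    cntLe k m N = (univ.filter (fun f : Fin k → Fin (N + m + 1) =>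
      (∑ i, (f i : ℕ)) ≤ N ∧ ∀ i, (f i : ℕ) < m)).card := by
  rw [cntLe]
  apply Finset.card_nbij'
    (i := fun f x => (⟨(f x : ℕ), by have := (f x).isLt; omega⟩ : Fin (N + m + 1)))
    (j := fun g x => (⟨(g x : ℕ) % m, Nat.mod_lt _ hm⟩ : Fin m))
  · intro f hf
    simp only [mem_coe, mem_filter, mem_univ, true_and] at hf ⊢
    exact ⟨hf, fun i => (f i).isLt⟩
  · intro g hg
    simp only [mem_coe, mem_filter, mem_univ, true_and] at hg ⊢
    calc ∑ x, ((g x : ℕ) % m) = ∑ x, (g x : ℕ) :=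
          Finset.sum_congr rfl (fun x _ => Nat.mod_eq_of_lt (hg.2 x))
    _ ≤ N := hg.1
  · intro f _
    funext x; apply Fin.ext; simp only
    exact Nat.mod_eq_of_lt (f x).isLt
  · intro g hg
    simp only [mem_coe, mem_filter, mem_univ, true_and] at hg
    funext x; apply Fin.ext; simp only
    exact Nat.mod_eq_of_lt (hg.2 x)

lemma cntLe_formula (k m N : ℕ) (hm : 0 < m) :
    (cntLe k m N : ℤ) = ∑ j ∈ range (k + 1),
      (-1 : ℤ) ^ j * (k.choose j : ℤ) *
        (if (j : ℕ) * m ≤ N then ((N - j * m + k).choose k : ℤ) else 0) := by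
  classical
  set M := N + m + 1 with hM
  set A : Finset (Fin k → Fin M) :=
    univ.filter (fun f => (∑ i, (f i : ℕ)) ≤ N) with hA
  have step1 : (cntLe k m N : ℤ) =
      ∑ f ∈ A, (if ∀ i, (f i : ℕ) < m then (1 : ℤ) else 0) := by
    have hcf : (A.filter (fun f => ∀ i, (f i : ℕ) < m)).card
        = ∑ f ∈ A, if ∀ i, (f i : ℕ) < m then (1 : ℕ) else 0 :=
      Finset.card_filter _ _
    rw [cntLe_transfer k m N hm, ← Finset.filter_filter, ← hA, hcf]
    push_cast
    rfl
  rw [step1]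
  have step3 : ∀ f ∈ A, (if ∀ i, (f i : ℕ) < m then (1 : ℤ) else 0) =
      ∑ S ∈ (univ : Finset (Fin k)).powerset,
        (if S ⊆ univ.filter (fun i => m ≤ (f i : ℕ)) then (-1 : ℤ) ^ S.card else 0) := by
    intro f _
    rw [← Finset.sum_filter]
    have hps : (univ : Finset (Fin k)).powerset.filter
        (· ⊆ univ.filter (fun i => m ≤ (f i : ℕ)))
        = (univ.filter (fun i => m ≤ (f i : ℕ))).powerset := by
      ext S
      simp [Finset.mem_powerset, Finset.subset_univ]
    have hiff : ((univ : Finset (Fin k)).filter (fun i => m ≤ (f i : ℕ)) = ∅)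
        ↔ (∀ i, (f i : ℕ) < m) := by
      simp [Finset.filter_eq_empty_iff]
    rw [hps, Finset.sum_powerset_neg_one_pow_card]
    simp only [hiff]
  rw [Finset.sum_congr rfl step3, Finset.sum_comm]
  have step5 : ∀ S ∈ (univ : Finset (Fin k)).powerset,
      (∑ f ∈ A, if S ⊆ univ.filter (fun i => m ≤ (f i : ℕ)) then (-1 : ℤ) ^ S.card else 0)
      = (-1 : ℤ) ^ S.card *
          (if S.card * m ≤ N then ((N - S.card * m + k).choose k : ℤ) else 0) := by
    intro S _
    rw [← Finset.sum_filter, Finset.sum_const, nsmul_eq_mul, mul_comm]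
    congr 1
    have hfilt : A.filter (fun f => S ⊆ univ.filter (fun i => m ≤ (f i : ℕ)))
        = univ.filter (fun f : Fin k → Fin M =>
            (∑ i, (f i : ℕ)) ≤ N ∧ ∀ i ∈ S, m ≤ (f i : ℕ)) := by
      rw [hA, Finset.filter_filter]
      apply Finset.filter_congr
      intro f _
      constructor
      · rintro ⟨h1, h2⟩
        exact ⟨h1, fun i hi => by simpa using (h2 hi)⟩
      · rintro ⟨h1, h2⟩
        refine ⟨h1, fun i hi => ?_⟩
        simp only [mem_filter, mem_univ, true_and]
        exact h2 i hi
    rw [hfilt]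
    exact forced_count k m N hm S
  rw [Finset.sum_congr rfl step5, Finset.sum_powerset]
  rw [Finset.card_univ, Fintype.card_fin]
  refine Finset.sum_congr rfl (fun j hj => ?_)
  have hc : ∀ S ∈ Finset.powersetCard j (univ : Finset (Fin k)),
      (-1 : ℤ) ^ S.card *
        (if S.card * m ≤ N then ((N - S.card * m + k).choose k : ℤ) else 0)
      = (-1 : ℤ) ^ j * (if j * m ≤ N then ((N - j * m + k).choose k : ℤ) else 0) := by
    intro S hS
    rw [(Finset.mem_powersetCard.mp hS).2]
  rw [Finset.sum_congr rfl hc, Finset.sum_const, Finset.card_powersetCard,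
    Finset.card_univ, Fintype.card_fin, nsmul_eq_mul]
  push_cast
  ring

lemma G_eq (k m : ℕ) (hm : 0 < m) (N : ℤ) :
    (∑ j ∈ range (k + 1), (-1 : ℤ) ^ j * (k.choose j : ℤ) *
        intChoose (N - (j : ℤ) * m + k) (N - (j : ℤ) * m)) =
      if 0 ≤ N then (cntLe k m N.toNat : ℤ) else 0 := by
  by_cases hN : 0 ≤ N
  · rw [if_pos hN, cntLe_formula k m N.toNat hm]
    refine Finset.sum_congr rfl (fun j _ => ?_)
    congr 1
    rw [intChoose]
    by_cases hj : (j : ℤ) * m ≤ N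
    · have h0 : (0 : ℤ) ≤ N - (j : ℤ) * m := by omega
      have hjm : (j : ℕ) * m ≤ N.toNat := by
        have : ((j * m : ℕ) : ℤ) ≤ N := by push_cast; omega
        omega
      rw [if_pos h0, if_pos hjm]
      have ht1 : (N - (j : ℤ) * m + k).toNat = N.toNat - j * m + k := by
        push_cast; omega
      have ht2 : (N - (j : ℤ) * m).toNat = N.toNat - j * m := by
        push_cast; omega
      rw [ht1, ht2]
      congr 1
      rw [← Nat.choose_symm (by omega : N.toNat - j * m ≤ N.toNat - j * m + k)]
      congr 1
      omega
    · have h0 : ¬ (0 : ℤ) ≤ N - (j : ℤ) * m := by omega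
      have hjm : ¬ (j : ℕ) * m ≤ N.toNat := by
        have : ¬ ((j * m : ℕ) : ℤ) ≤ N := by push_cast; omega
        omega
      rw [if_neg h0, if_neg hjm]
  · rw [if_neg hN]
    have hN' : N < 0 := by omega
    refine Finset.sum_eq_zero (fun j _ => ?_)
    have h2 : ¬ (0 : ℤ) ≤ N - (j : ℤ) * m := by
      have h1 : (0 : ℤ) ≤ (j : ℤ) * m := by positivity
      omega
    rw [intChoose, if_neg h2, mul_zero]

lemma interval_iff {Q W n h : ℕ} (hQ : 0 < Q) (hQW : Q ≤ W) :
    (n % W < Q ∧ n / W = h) ↔ (h * W ≤ n ∧ n ≤ h * W + (Q - 1)) := by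
  have hW : 0 < W := lt_of_lt_of_le hQ hQW
  constructor
  · rintro ⟨h1, rfl⟩
    refine ⟨Nat.div_mul_le_self n W, ?_⟩
    calc n = W * (n / W) + n % W := (Nat.div_add_mod n W).symm
    _ ≤ W * (n / W) + (Q - 1) := Nat.add_le_add_left (by omega) _
    _ = n / W * W + (Q - 1) := by rw [Nat.mul_comm]
  · rintro ⟨h1, h2⟩
    have hi : n < Nat.succ h * W := by
      rw [Nat.succ_mul]
      have : h * W + (Q - 1) < h * W + W := by omega
      omega
    have hdiv : n / W = h := Nat.div_eq_of_lt_le h1 hi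
    refine ⟨?_, hdiv⟩
    have hd := Nat.div_add_mod n W
    rw [hdiv] at hd
    have hcomm : W * h = h * W := Nat.mul_comm W h
    rw [hcomm] at hd
    omega

lemma count_mod (q k w : ℕ) (hq : 0 < q) (hqw : q ≤ w) :
    ((univ.filter (fun f : Fin k → Fin (2 ^ q) =>
        (∑ i, (f i : ℕ)) % 2 ^ w < 2 ^ q)).card : ℤ) = Fcount q k w := by
  classical
  have hm : 0 < 2 ^ q := Nat.two_pow_pos q
  have hW : 0 < 2 ^ w := Nat.two_pow_pos w
  have hmW : 2 ^ q ≤ 2 ^ w := Nat.pow_le_pow_right (by norm_num) hqw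
  have hbound : ∀ f : Fin k → Fin (2 ^ q), (∑ i, (f i : ℕ)) ≤ k * (2 ^ q - 1) := by
    intro f
    calc ∑ i, (f i : ℕ) ≤ ∑ _i : Fin k, (2 ^ q - 1) :=
          Finset.sum_le_sum (fun i _ => by have := (f i).isLt; omega)
    _ = k * (2 ^ q - 1) := by
        rw [Finset.sum_const, Finset.card_univ, Fintype.card_fin, smul_eq_mul]
  rw [Finset.card_eq_sum_card_fiberwise (f := fun f => (∑ i, (f i : ℕ)) / 2 ^ w)
    (t := range (k * (2 ^ q - 1) / 2 ^ w + 1))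
    (fun f _ => by
      rw [mem_coe, mem_range]
      exact Nat.lt_succ_of_le (Nat.div_le_div_right (hbound f)))]
  rw [Fcount]
  push_cast
  refine Finset.sum_congr rfl (fun h _ => ?_)
  -- arithmetic facts about `h`
  have hpos1 : (0 : ℤ) ≤ (h : ℤ) * 2 ^ w + 2 ^ q - 1 := by
    have h1 : (0 : ℤ) ≤ (h : ℤ) * 2 ^ w := by positivity
    have h2 : (1 : ℤ) ≤ (2 : ℤ) ^ q := by exact_mod_cast Nat.one_le_two_pow
    omega
  have htn1 : (((h : ℤ) * 2 ^ w + 2 ^ q - 1)).toNat = h * 2 ^ w + (2 ^ q - 1) := by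
    have e1 : ((h * 2 ^ w : ℕ) : ℤ) = (h : ℤ) * 2 ^ w := by push_cast; ring
    have e2 : ((2 ^ q : ℕ) : ℤ) = (2 : ℤ) ^ q := by push_cast; ring
    omega
  -- lower count
  have hlow : ((univ.filter (fun f : Fin k → Fin (2 ^ q) =>
        (∑ i, (f i : ℕ)) < h * 2 ^ w)).card : ℤ)
      = if (0 : ℤ) ≤ (h : ℤ) * 2 ^ w - 1
          then (cntLe k (2 ^ q) (((h : ℤ) * 2 ^ w - 1).toNat) : ℤ) else 0 := by
    rcases Nat.eq_zero_or_pos h with rfl | hh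
    · rw [if_neg (by simp)]
      norm_cast
      rw [Finset.card_eq_zero, Finset.filter_eq_empty_iff]
      intro f _
      simp
    · have hpos : 0 < h * 2 ^ w := Nat.mul_pos hh hW
      have hposZ : (0 : ℤ) ≤ (h : ℤ) * 2 ^ w - 1 := by
        have h1 : ((h * 2 ^ w : ℕ) : ℤ) = (h : ℤ) * 2 ^ w := by push_cast; ring
        omega
      rw [if_pos hposZ, cntLe]
      have htn : ((h : ℤ) * 2 ^ w - 1).toNat = h * 2 ^ w - 1 := by
        have h1 : ((h * 2 ^ w : ℕ) : ℤ) = (h : ℤ) * 2 ^ w := by push_cast; ring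
        omega
      rw [htn]
      congr 2
      refine Finset.filter_congr (fun f _ => ?_)
      constructor
      · intro hlt; omega
      · intro hle; omega
  -- identify the fiber with an interval count
  have hfib : (Finset.filter (fun f => (∑ i, (f i : ℕ)) / 2 ^ w = h)
        (univ.filter (fun f : Fin k → Fin (2 ^ q) => (∑ i, (f i : ℕ)) % 2 ^ w < 2 ^ q)))
      = univ.filter (fun f : Fin k → Fin (2 ^ q) =>
          h * 2 ^ w ≤ ∑ i, (f i : ℕ) ∧ (∑ i, (f i : ℕ)) ≤ h * 2 ^ w + (2 ^ q - 1)) := by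
    rw [Finset.filter_filter]
    exact Finset.filter_congr (fun f _ => interval_iff hm hmW)
  rw [hfib]
  -- split off the lower part
  have hsplit := Finset.card_filter_add_card_filter_not
    (s := univ.filter (fun f : Fin k → Fin (2 ^ q) =>
      (∑ i, (f i : ℕ)) ≤ h * 2 ^ w + (2 ^ q - 1)))
    (p := fun f => h * 2 ^ w ≤ ∑ i, (f i : ℕ))
  have heq1 : ((univ.filter (fun f : Fin k → Fin (2 ^ q) =>
        (∑ i, (f i : ℕ)) ≤ h * 2 ^ w + (2 ^ q - 1))).filter
          (fun f => h * 2 ^ w ≤ ∑ i, (f i : ℕ)))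
      = univ.filter (fun f : Fin k → Fin (2 ^ q) =>
          h * 2 ^ w ≤ ∑ i, (f i : ℕ) ∧ (∑ i, (f i : ℕ)) ≤ h * 2 ^ w + (2 ^ q - 1)) := by
    rw [Finset.filter_filter]
    exact Finset.filter_congr (fun f _ =>
      ⟨fun ⟨h1, h2⟩ => ⟨h2, h1⟩, fun ⟨h1, h2⟩ => ⟨h2, h1⟩⟩)
  have heq2 : ((univ.filter (fun f : Fin k → Fin (2 ^ q) =>
        (∑ i, (f i : ℕ)) ≤ h * 2 ^ w + (2 ^ q - 1))).filter
          (fun f => ¬ h * 2 ^ w ≤ ∑ i, (f i : ℕ)))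
      = univ.filter (fun f : Fin k → Fin (2 ^ q) =>
          (∑ i, (f i : ℕ)) < h * 2 ^ w) := by
    rw [Finset.filter_filter]
    refine Finset.filter_congr (fun f _ => ?_)
    simp only [Nat.not_le]
    exact ⟨fun ⟨_, h2⟩ => h2,
      fun h2 => ⟨le_trans (le_of_lt h2) (Nat.le_add_right _ _), h2⟩⟩
  rw [heq1, heq2] at hsplit
  -- express everything via G_eq
  have hG1 := G_eq k (2 ^ q) hm ((h : ℤ) * 2 ^ w + 2 ^ q - 1)
  have hG2 := G_eq k (2 ^ q) hm ((h : ℤ) * 2 ^ w - 1)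
  rw [if_pos hpos1, htn1] at hG1
  have hfinal : ((univ.filter (fun f : Fin k → Fin (2 ^ q) =>
        h * 2 ^ w ≤ ∑ i, (f i : ℕ) ∧ (∑ i, (f i : ℕ)) ≤ h * 2 ^ w + (2 ^ q - 1))).card : ℤ)
      = (cntLe k (2 ^ q) (h * 2 ^ w + (2 ^ q - 1)) : ℤ)
        - ((univ.filter (fun f : Fin k → Fin (2 ^ q) =>
            (∑ i, (f i : ℕ)) < h * 2 ^ w)).card : ℤ) := by
    have h1 : (((univ.filter (fun f : Fin k → Fin (2 ^ q) =>
        h * 2 ^ w ≤ ∑ i, (f i : ℕ) ∧ (∑ i, (f i : ℕ)) ≤ h * 2 ^ w + (2 ^ q - 1))).card : ℤ)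
        + ((univ.filter (fun f : Fin k → Fin (2 ^ q) =>
            (∑ i, (f i : ℕ)) < h * 2 ^ w)).card : ℤ))
        = (cntLe k (2 ^ q) (h * 2 ^ w + (2 ^ q - 1)) : ℤ) := by exact_mod_cast hsplit
    linarith
  rw [hfinal, hlow, ← hG1, ← hG2]
  rw [← Finset.sum_sub_distrib]
  refine Finset.sum_congr rfl (fun j _ => ?_)
  push_cast
  ring_nf

lemma card_split (r q k : ℕ) (hr : 0 < r) (hq : 0 < q) :
    (univ.filter (fun a : Fin k → BitVec (r + q) =>
        (∑ i, (a i).rotateLeft r) = (∑ i, a i).rotateLeft r)).card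
    = (univ.filter (fun H : Fin k → Fin (2 ^ r) =>
          (∑ i, (H i : ℕ)) % 2 ^ (r + q) < 2 ^ r)).card *
      (univ.filter (fun L : Fin k → Fin (2 ^ q) =>
          (∑ i, (L i : ℕ)) % 2 ^ (r + q) < 2 ^ q)).card := by
  classical
  set w := r + q with hwdef
  have hrw : r < w := by omega
  have hwr : w - r = q := by omega
  have hQ : 0 < 2 ^ q := Nat.two_pow_pos q
  have hR : 0 < 2 ^ r := Nat.two_pow_pos r
  have hpow : 2 ^ w = 2 ^ q * 2 ^ r := by rw [hwdef, pow_add, Nat.mul_comm]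
  -- the key condition rewrite
  have hcond : ∀ a : Fin k → BitVec w,
      ((∑ i, (a i).rotateLeft r) = (∑ i, a i).rotateLeft r)
      ↔ ((∑ i, ((a i).toNat / 2 ^ q)) % 2 ^ w < 2 ^ r
          ∧ (∑ i, ((a i).toNat % 2 ^ q)) % 2 ^ w < 2 ^ q) := by
    intro a
    rw [BitVec.toNat_eq, toNat_sum, toNat_rotateLeft hrw, toNat_sum]
    have e1 : ∀ i, ((a i).rotateLeft r).toNat
        = (a i).toNat % 2 ^ q * 2 ^ r + (a i).toNat / 2 ^ q := by
      intro i
      rw [toNat_rotateLeft hrw, hwr]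
    rw [Finset.sum_congr rfl (fun i _ => e1 i), hwr]
    have e2 : (∑ i, ((a i).toNat % 2 ^ q * 2 ^ r + (a i).toNat / 2 ^ q))
        = 2 ^ r * (∑ i, (a i).toNat % 2 ^ q) + (∑ i, (a i).toNat / 2 ^ q) := by
      rw [Finset.sum_add_distrib, Finset.mul_sum]
      congr 1
      exact Finset.sum_congr rfl (fun i _ => by ring)
    have e3 : (∑ i, (a i).toNat)
        = 2 ^ q * (∑ i, (a i).toNat / 2 ^ q) + (∑ i, (a i).toNat % 2 ^ q) := by
      rw [Finset.mul_sum, ← Finset.sum_add_distrib]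
      exact Finset.sum_congr rfl (fun i _ => (Nat.div_add_mod _ _).symm)
    rw [e2, e3]
    exact key_equiv r q _ _ hr hq
  have hval : ∀ (p : (Fin k → Fin (2 ^ r)) × (Fin k → Fin (2 ^ q))) (i : Fin k),
      (BitVec.ofNat w (2 ^ q * (p.1 i : ℕ) + (p.2 i : ℕ))).toNat
        = 2 ^ q * (p.1 i : ℕ) + (p.2 i : ℕ) := by
    intro p i
    rw [BitVec.toNat_ofNat]
    apply Nat.mod_eq_of_lt
    have h1 := (p.1 i).isLt
    have h2 := (p.2 i).isLt
    calc 2 ^ q * (p.1 i : ℕ) + (p.2 i : ℕ)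
        < 2 ^ q * (p.1 i : ℕ) + 2 ^ q := by omega
    _ = 2 ^ q * ((p.1 i : ℕ) + 1) := by ring
    _ ≤ 2 ^ q * 2 ^ r := Nat.mul_le_mul_left _ (by omega)
    _ = 2 ^ w := hpow.symm
  have hd : ∀ (p : (Fin k → Fin (2 ^ r)) × (Fin k → Fin (2 ^ q))) (i : Fin k),
      (BitVec.ofNat w (2 ^ q * (p.1 i : ℕ) + (p.2 i : ℕ))).toNat / 2 ^ q = (p.1 i : ℕ) := by
    intro p i
    rw [hval p i, Nat.mul_add_div hQ, Nat.div_eq_of_lt (p.2 i).isLt, Nat.add_zero]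
  have hmm : ∀ (p : (Fin k → Fin (2 ^ r)) × (Fin k → Fin (2 ^ q))) (i : Fin k),
      (BitVec.ofNat w (2 ^ q * (p.1 i : ℕ) + (p.2 i : ℕ))).toNat % 2 ^ q = (p.2 i : ℕ) := by
    intro p i
    rw [hval p i, Nat.mul_add_mod, Nat.mod_eq_of_lt (p.2 i).isLt]
  -- transfer to a product count
  rw [← Finset.card_product, ← Finset.filter_product]
  apply Finset.card_nbij'
    (i := fun a => (fun i => (⟨(a i).toNat / 2 ^ q, by
        apply Nat.div_lt_of_lt_mul
        have := (a i).isLt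
        rw [hpow] at this
        exact this⟩ : Fin (2 ^ r)),
      fun i => (⟨(a i).toNat % 2 ^ q, Nat.mod_lt _ hQ⟩ : Fin (2 ^ q))))
    (j := fun p i => BitVec.ofNat w (2 ^ q * (p.1 i : ℕ) + (p.2 i : ℕ)))
  · intro a ha
    simp only [mem_coe, mem_filter, mem_univ, true_and, Finset.mem_product] at ha ⊢
    exact (hcond a).mp ha
  · intro p hp
    simp only [mem_coe, mem_filter, mem_univ, true_and, Finset.mem_product] at hp ⊢
    rw [hcond]
    rw [Finset.sum_congr rfl (fun i _ => hd p i), Finset.sum_congr rfl (fun i _ => hmm p i)]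
    exact hp
  · intro a _
    funext i
    simp only
    have h1 : 2 ^ q * ((a i).toNat / 2 ^ q) + (a i).toNat % 2 ^ q = (a i).toNat :=
      Nat.div_add_mod _ _
    rw [h1, BitVec.ofNat_toNat, BitVec.setWidth_eq]
  · intro p _
    obtain ⟨p1, p2⟩ := p
    simp only [Prod.mk.injEq]
    constructor
    · funext i
      apply Fin.ext
      exact hd (p1, p2) i
    · funext i
      apply Fin.ext
      exact hmm (p1, p2) i

end RotAux

theorem rotational_probability_k_addends
    (w : ℕ) (hw : 2 ≤ w) (r : ℕ) (hr : 1 ≤ r) (hrw : r ≤ w - 1)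
    (k : ℕ) (hk : 1 ≤ k) :
    ((Finset.univ.filter (fun a : Fin k → BitVec w =>
        (∑ i, (a i).rotateLeft r) = (∑ i, a i).rotateLeft r)).card : ℤ) =
      Fcount r k w * Fcount (w - r) k w ∧
    ((Finset.univ.filter (fun a : Fin k → BitVec w =>
        (∑ i, (a i).rotateLeft r) = (∑ i, a i).rotateLeft r)).card : ℚ)
        / 2 ^ (k * w)
      = ((Fcount r k w * Fcount (w - r) k w : ℤ) : ℚ) / 2 ^ (k * w) := by
  obtain ⟨q, rfl⟩ : ∃ q, w = r + q := ⟨w - r, by omega⟩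
  have hq : 0 < q := by omega
  have hsub : r + q - r = q := by omega
  rw [hsub]
  have hmain : ((Finset.univ.filter (fun a : Fin k → BitVec (r + q) =>
      (∑ i, (a i).rotateLeft r) = (∑ i, a i).rotateLeft r)).card : ℤ) =
      Fcount r k (r + q) * Fcount q k (r + q) := by
    rw [RotAux.card_split r q k hr hq]
    push_cast
    rw [RotAux.count_mod r k (r + q) hr (by omega),
      RotAux.count_mod q k (r + q) hq (by omega)]
  refine ⟨hmain, ?_⟩
  have h2 : ((Finset.univ.filter (fun a : Fin k → BitVec (r + q) =>
      (∑ i, (a i).rotateLeft r) = (∑ i, a i).rotateLeft r)).card : ℚ)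
      = ((Fcount r k (r + q) * Fcount q k (r + q) : ℤ) : ℚ) := by
    exact_mod_cast hmain
  rw [h2]
end

section
/- Let w ≥ 2 and let r = 1 or r = w−1. The number N of triples (a, b, c) of w-bit words such that (a ⋘ r) ⊞ (b ⋘ r) ⊞ (c ⋘ r) = (a ⊞ b ⊞ c) ⋘ r equals 4 · ( C(2^(w−1) + 2, 2^(w−1) − 1) + C(2^(w−1), 2^(w−1) − 3) ), and moreover satisfies 3·N = 2^(w+2) · (2^(2w−3) + 1); equivalently, for independent uniformly distributed a, b, c, the probability of the equality is 4(2^(2w−3) + 1)/(3 · 2^(2w)). -/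
open Finset


lemma modhelp (X k t : ℕ) (ht : t < X) : (k * X + t) % (2 * X) = k % 2 * X + t := by
  have hu : k % 2 < 2 := Nat.mod_lt _ (by norm_num)
  have h : k * X + t = (k / 2) * (2 * X) + (k % 2 * X + t) := by
    have h2 := Nat.div_add_mod k 2
    calc k * X + t = (2 * (k / 2) + k % 2) * X + t := by rw [h2]
    _ = (k / 2) * (2 * X) + (k % 2 * X + t) := by ring
  rw [h, Nat.add_comm ((k/2) * (2*X)), Nat.add_mul_mod_self_right]
  apply Nat.mod_eq_of_lt
  interval_cases h : k % 2 <;> omega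

lemma key1 (M L H : ℕ) (hM : 2 ≤ M) (hL : L < 3 * M) (hH : H ≤ 3) :
    (L * 2 + H) % (2 * M) = (L % M) * 2 + (H + L / M) % 2 ↔
      (H ≤ 1 ∧ (L < M ∨ 2 * M ≤ L)) := by
  have hM0 : 0 < M := by omega
  have hdm := Nat.div_add_mod L M
  have hsM : L % M < M := Nat.mod_lt _ hM0
  have haa : L / M < 3 := (Nat.div_lt_iff_lt_mul hM0).mpr (by omega)
  set a := L / M with ha
  set s := L % M with hs
  have hrw : L * 2 + H = a * (2 * M) + (2 * s + H) := by
    calc L * 2 + H = (M * a + s) * 2 + H := by rw [hdm]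
    _ = a * (2 * M) + (2 * s + H) := by ring
  rw [hrw, Nat.add_comm (a * (2 * M)), Nat.add_mul_mod_self_right]
  rcases Nat.lt_or_ge (2 * s + H) (2 * M) with h | h
  · rw [Nat.mod_eq_of_lt h]
    interval_cases a <;> omega
  · rw [Nat.mod_eq_sub_mod h, Nat.mod_eq_of_lt (by omega)]
    interval_cases a <;> omega

lemma key2 (R L H : ℕ) (hR : 2 ≤ R) (hL : L ≤ 3) (hH : H < 3 * R) :
    (L * R + H) % (R * 2) =
      (((H * 2 + L) % (R * 2)) % 2) * R + ((H * 2 + L) % (R * 2)) / 2 ↔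
      (L ≤ 1 ∧ (H < R ∨ 2 * R ≤ H)) := by
  have hR0 : 0 < R := by omega
  have hdm := Nat.div_add_mod H R
  have htR : H % R < R := Nat.mod_lt _ hR0
  have hg : H / R < 3 := (Nat.div_lt_iff_lt_mul hR0).mpr (by omega)
  set g := H / R with hgd
  set t := H % R with htd
  -- rewrite LHS
  have hlhs : (L * R + H) % (R * 2) = (L + g) % 2 * R + t := by
    have h1 : L * R + H = (L + g) * R + t := by
      calc L * R + H = L * R + (R * g + t) := by rw [hdm]
      _ = (L + g) * R + t := by ring
    rw [h1, Nat.mul_comm R 2]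
    exact modhelp R (L + g) t htR
  -- compute S := (H*2+L) % (R*2)
  have h2 : H * 2 + L = g * (2 * R) + (2 * t + L) := by
    calc H * 2 + L = (R * g + t) * 2 + L := by rw [hdm]
    _ = g * (2 * R) + (2 * t + L) := by ring
  have h3 : (H * 2 + L) % (R * 2) = (2 * t + L) % (2 * R) := by
    rw [h2, Nat.mul_comm R 2, Nat.add_comm (g * (2 * R)), Nat.add_mul_mod_self_right]
  rcases Nat.lt_or_ge (2 * t + L) (2 * R) with h | h
  · rw [hlhs, h3, Nat.mod_eq_of_lt h]
    have e1 : (2 * t + L) % 2 = L % 2 := by omega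
    have e2 : (2 * t + L) / 2 = t + L / 2 := by omega
    rw [e1, e2]
    interval_cases L <;> interval_cases g <;> omega
  · rw [hlhs, h3, Nat.mod_eq_sub_mod h,
      Nat.mod_eq_of_lt (show 2 * t + L - 2 * R < 2 * R by omega)]
    have e1 : (2 * t + L - 2 * R) % 2 = L % 2 := by omega
    have e2 : (2 * t + L - 2 * R) / 2 = t + L / 2 - R := by omega
    rw [e1, e2]
    interval_cases L <;> interval_cases g <;> omega

lemma toNat_rotL {w : ℕ} (x : BitVec w) {r : ℕ} (hr : r < w) :
    (x.rotateLeft r).toNat = x.toNat % 2 ^ (w - r) * 2 ^ r + x.toNat / 2 ^ (w - r) := by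
  rw [BitVec.rotateLeft_eq_rotateLeftAux_of_lt hr]
  unfold BitVec.rotateLeftAux
  rw [BitVec.toNat_or, BitVec.toNat_shiftLeft, BitVec.toNat_ushiftRight]
  rw [Nat.shiftLeft_eq, Nat.shiftRight_eq_div_pow]
  have h2w : 2 ^ w = 2 ^ (w - r) * 2 ^ r := by rw [← pow_add]; congr 1; omega
  have hlt : x.toNat / 2 ^ (w - r) < 2 ^ r := by
    apply Nat.div_lt_of_lt_mul
    rw [← h2w]; exact x.isLt
  rw [h2w, Nat.mul_mod_mul_right, mul_comm (x.toNat % 2 ^ (w - r)) (2 ^ r)]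
  exact (Nat.two_pow_add_eq_or_of_lt hlt _).symm

lemma bv_eq_iff {w : ℕ} (r : ℕ) (hr0 : 0 < r) (hrw : r < w) (a b c : BitVec w) :
    (a.rotateLeft r + b.rotateLeft r + c.rotateLeft r = (a + b + c).rotateLeft r) ↔
    ((a.toNat % 2 ^ (w - r) + b.toNat % 2 ^ (w - r) + c.toNat % 2 ^ (w - r)) * 2 ^ r
        + (a.toNat / 2 ^ (w - r) + b.toNat / 2 ^ (w - r) + c.toNat / 2 ^ (w - r))) % 2 ^ w
      = (((a.toNat + b.toNat + c.toNat) % 2 ^ w) % 2 ^ (w - r)) * 2 ^ r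
        + ((a.toNat + b.toNat + c.toNat) % 2 ^ w) / 2 ^ (w - r) := by
  rw [BitVec.toNat_eq]
  rw [BitVec.toNat_add, BitVec.toNat_add, toNat_rotL _ hrw, toNat_rotL _ hrw,
    toNat_rotL _ hrw, toNat_rotL _ hrw, BitVec.toNat_add, BitVec.toNat_add]
  simp only [Nat.mod_add_mod]
  have e : a.toNat % 2 ^ (w - r) * 2 ^ r + a.toNat / 2 ^ (w - r)
        + (b.toNat % 2 ^ (w - r) * 2 ^ r + b.toNat / 2 ^ (w - r))
        + (c.toNat % 2 ^ (w - r) * 2 ^ r + c.toNat / 2 ^ (w - r))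
      = (a.toNat % 2 ^ (w - r) + b.toNat % 2 ^ (w - r) + c.toNat % 2 ^ (w - r)) * 2 ^ r
        + (a.toNat / 2 ^ (w - r) + b.toNat / 2 ^ (w - r) + c.toNat / 2 ^ (w - r)) := by ring
  rw [e]

lemma r1_reduce (M : ℕ) (hM : 2 ≤ M) (x y z : ℕ) (hx : x < 2 * M) (hy : y < 2 * M)
    (hz : z < 2 * M) :
    (((x % M + y % M + z % M) * 2 + (x / M + y / M + z / M)) % (2 * M)
      = ((x + y + z) % (2 * M) % M) * 2 + ((x + y + z) % (2 * M)) / M)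
    ↔ ((x / M + y / M + z / M) ≤ 1 ∧
        (x % M + y % M + z % M < M ∨ 2 * M ≤ x % M + y % M + z % M)) := by
  have hM0 : 0 < M := by omega
  set L := x % M + y % M + z % M with hL
  set H := x / M + y / M + z / M with hH
  have hLb : L < 3 * M := by
    have := Nat.mod_lt x hM0; have := Nat.mod_lt y hM0; have := Nat.mod_lt z hM0; omega
  have hHb : H ≤ 3 := by
    have h1 : x / M < 2 := (Nat.div_lt_iff_lt_mul hM0).mpr (by omega)
    have h2 : y / M < 2 := (Nat.div_lt_iff_lt_mul hM0).mpr (by omega)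
    have h3 : z / M < 2 := (Nat.div_lt_iff_lt_mul hM0).mpr (by omega)
    omega
  have hsum : x + y + z = M * H + L := by
    have h1 := Nat.div_add_mod x M
    have h2 := Nat.div_add_mod y M
    have h3 := Nat.div_add_mod z M
    rw [hH, hL, Nat.mul_add, Nat.mul_add]
    omega
  have hsM : L % M < M := Nat.mod_lt _ hM0
  -- T = (x+y+z) % (2M)
  have hT : (x + y + z) % (2 * M) = (H + L / M) % 2 * M + L % M := by
    rw [hsum]
    have : M * H + L = (H + L / M) * M + L % M := by
      have := Nat.div_add_mod L M
      calc M * H + L = M * H + (M * (L / M) + L % M) := by rw [Nat.div_add_mod]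
      _ = (H + L / M) * M + L % M := by ring
    rw [this]
    exact modhelp M (H + L / M) (L % M) hsM
  have hmod2 : (H + L / M) % 2 < 2 := Nat.mod_lt _ (by norm_num)
  have hTm : (x + y + z) % (2 * M) % M = L % M := by
    rw [hT, Nat.add_comm, Nat.add_mul_mod_self_right, Nat.mod_mod_of_dvd _ dvd_rfl]
  have hTd : (x + y + z) % (2 * M) / M = (H + L / M) % 2 := by
    rw [hT, mul_comm, Nat.mul_add_div hM0, Nat.div_eq_of_lt hsM, Nat.add_zero]
  rw [hTm, hTd]
  exact key1 M L H hM hLb hHb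


lemma card_pairs_sum_eq (s : ℕ) :
    (((range (s+1) ×ˢ range (s+1)).filter (fun q => q.1 + q.2 = s))).card = s + 1 := by
  have h : (((range (s+1) ×ˢ range (s+1)).filter (fun q => q.1 + q.2 = s))).card
      = (range (s+1)).card := by
    apply Finset.card_nbij' (i := fun q => q.1) (j := fun x => (x, s - x))
    · intro q hq; simp only [Finset.mem_coe, mem_filter, mem_product, mem_range] at hq ⊢; omega
    · intro x hx; simp only [Finset.mem_coe, mem_filter, mem_product, mem_range] at hx ⊢; omega
    · intro q hq; simp only [Finset.mem_coe, mem_filter, mem_product, mem_range] at hq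
      ext <;> simp <;> omega
    · intro x hx; simp
  rw [h, Finset.card_range]

lemma card_pairs_le (t : ℕ) :
    ((range (t+1) ×ˢ range (t+1)).filter (fun q => q.1 + q.2 ≤ t)).card
      = (t+2).choose 2 := by
  induction t with
  | zero => decide
  | succ n ih =>
    have hsplit : ((range (n+2) ×ˢ range (n+2)).filter (fun q => q.1 + q.2 ≤ n+1))
        = ((range (n+1) ×ˢ range (n+1)).filter (fun q => q.1 + q.2 ≤ n))
          ∪ ((range (n+2) ×ˢ range (n+2)).filter (fun q => q.1 + q.2 = n+1)) := by
      ext ⟨x, y⟩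
      simp only [mem_union, mem_filter, mem_product, mem_range]
      omega
    rw [hsplit, Finset.card_union_of_disjoint, ih, card_pairs_sum_eq (n+1)]
    · rw [show n+1+2 = (n+2)+1 by ring, Nat.choose_succ_succ (n+2) 1,
        Nat.choose_one_right]
      exact Nat.add_comm _ _
    · rw [Finset.disjoint_left]
      intro q hq hq'
      simp only [mem_filter, mem_product, mem_range] at hq hq'
      omega

lemma card_triples_sum_eq (s : ℕ) :
    ((range (s+1) ×ˢ range (s+1) ×ˢ range (s+1)).filter
        (fun q => q.1 + q.2.1 + q.2.2 = s)).card = (s+2).choose 2 := by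
  rw [← card_pairs_le s]
  apply Finset.card_nbij' (i := fun q => (q.1, q.2.1))
    (j := fun q => (q.1, q.2, s - q.1 - q.2))
  · intro q hq; simp only [Finset.mem_coe, mem_filter, mem_product, mem_range] at hq ⊢; omega
  · intro q hq; simp only [Finset.mem_coe, mem_filter, mem_product, mem_range] at hq ⊢; omega
  · intro q hq; simp only [Finset.mem_coe, mem_filter, mem_product, mem_range] at hq
    ext <;> simp <;> omega
  · intro q hq; simp only [Finset.mem_coe, mem_filter, mem_product, mem_range] at hq
    ext <;> simp <;> omega

lemma card_triples_lt (t : ℕ) :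
    ((range t ×ˢ range t ×ˢ range t).filter
        (fun q => q.1 + q.2.1 + q.2.2 < t)).card = (t+2).choose 3 := by
  induction t with
  | zero => simp [Nat.choose_eq_zero_of_lt (by norm_num : 2 < 3)]
  | succ n ih =>
    have hsplit : ((range (n+1) ×ˢ range (n+1) ×ˢ range (n+1)).filter
          (fun q => q.1 + q.2.1 + q.2.2 < n+1))
        = ((range n ×ˢ range n ×ˢ range n).filter (fun q => q.1 + q.2.1 + q.2.2 < n))
          ∪ ((range (n+1) ×ˢ range (n+1) ×ˢ range (n+1)).filter
              (fun q => q.1 + q.2.1 + q.2.2 = n)) := by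
      ext ⟨x, y, z⟩
      simp only [mem_union, mem_filter, mem_product, mem_range]
      omega
    rw [hsplit, Finset.card_union_of_disjoint, ih, card_triples_sum_eq n]
    · rw [show n+1+2 = (n+2)+1 by ring, Nat.choose_succ_succ (n+2) 2]
      exact Nat.add_comm _ _
    · rw [Finset.disjoint_left]
      intro q hq hq'
      simp only [mem_filter, mem_product, mem_range] at hq hq'
      omega

lemma card_triples_ge (K : ℕ) (hK : 2 ≤ K) :
    ((range K ×ˢ range K ×ˢ range K).filter
        (fun q => 2 * K ≤ q.1 + q.2.1 + q.2.2)).card = K.choose 3 := by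
  have h : K.choose 3 = ((K-2)+2).choose 3 := by congr 1; omega
  rw [h, ← card_triples_lt (K-2)]
  apply Finset.card_nbij' (i := fun q => (K-1-q.1, K-1-q.2.1, K-1-q.2.2))
    (j := fun q => (K-1-q.1, K-1-q.2.1, K-1-q.2.2))
  · intro q hq; simp only [Finset.mem_coe, mem_filter, mem_product, mem_range] at hq ⊢; omega
  · intro q hq; simp only [Finset.mem_coe, mem_filter, mem_product, mem_range] at hq ⊢; omega
  · intro q hq; simp only [Finset.mem_coe, mem_filter, mem_product, mem_range] at hq
    ext <;> simp <;> omega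
  · intro q hq; simp only [Finset.mem_coe, mem_filter, mem_product, mem_range] at hq
    ext <;> simp <;> omega

lemma bigcount (K : ℕ) (hK : 2 ≤ K) :
    ((range K ×ˢ range K ×ˢ range K).filter
        (fun q => q.1 + q.2.1 + q.2.2 < K ∨ 2 * K ≤ q.1 + q.2.1 + q.2.2)).card
      = (K+2).choose 3 + K.choose 3 := by
  rw [Finset.filter_or, Finset.card_union_of_disjoint, card_triples_lt, card_triples_ge K hK]
  rw [Finset.disjoint_left]
  intro q hq hq'
  simp only [mem_filter, mem_product, mem_range] at hq hq'
  omega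

lemma main_count_r1 (w : ℕ) (hw : 2 ≤ w) :
    (Finset.univ.filter (fun p : BitVec w × BitVec w × BitVec w =>
        p.1.rotateLeft 1 + p.2.1.rotateLeft 1 + p.2.2.rotateLeft 1 =
          (p.1 + p.2.1 + p.2.2).rotateLeft 1)).card
    = 4 * ((2 ^ (w-1) + 2).choose 3 + (2 ^ (w-1)).choose 3) := by
  set K := 2 ^ (w - 1) with hKdef
  have hK : 2 ≤ K := by
    rw [hKdef]
    calc 2 = 2 ^ 1 := rfl
    _ ≤ 2 ^ (w - 1) := Nat.pow_le_pow_right (by norm_num) (by omega)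
  have hK0 : 0 < K := by omega
  have h2w : 2 ^ w = 2 * K := by
    rw [hKdef, ← pow_succ']
    congr 1
    omega
  have hbv : ∀ a : BitVec w, a.toNat < 2 * K := by
    intro a; rw [← h2w]; exact a.isLt
  have hiff : ∀ a b c : BitVec w,
      (a.rotateLeft 1 + b.rotateLeft 1 + c.rotateLeft 1 = (a + b + c).rotateLeft 1) ↔
      (a.toNat / K + b.toNat / K + c.toNat / K ≤ 1 ∧
        (a.toNat % K + b.toNat % K + c.toNat % K < K ∨
          2 * K ≤ a.toNat % K + b.toNat % K + c.toNat % K)) := by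
    intro a b c
    have h1 := bv_eq_iff 1 one_pos (by omega) a b c
    rw [pow_one, ← hKdef, h2w] at h1
    exact h1.trans (r1_reduce K hK a.toNat b.toNat c.toNat (hbv a) (hbv b) (hbv c))
  have hcard : (Finset.univ.filter (fun p : BitVec w × BitVec w × BitVec w =>
        p.1.rotateLeft 1 + p.2.1.rotateLeft 1 + p.2.2.rotateLeft 1 =
          (p.1 + p.2.1 + p.2.2).rotateLeft 1)).card
      = (((range 2 ×ˢ range 2 ×ˢ range 2).filter
            (fun q => q.1 + q.2.1 + q.2.2 ≤ 1)) ×ˢ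
          ((range K ×ˢ range K ×ˢ range K).filter
            (fun q => q.1 + q.2.1 + q.2.2 < K ∨ 2 * K ≤ q.1 + q.2.1 + q.2.2))).card := by
    apply Finset.card_nbij'
      (i := fun p => ((p.1.toNat / K, p.2.1.toNat / K, p.2.2.toNat / K),
        (p.1.toNat % K, p.2.1.toNat % K, p.2.2.toNat % K)))
      (j := fun q => (BitVec.ofNat w (q.1.1 * K + q.2.1),
        BitVec.ofNat w (q.1.2.1 * K + q.2.2.1), BitVec.ofNat w (q.1.2.2 * K + q.2.2.2)))
    · intro p hp
      rw [Finset.mem_coe, mem_filter] at hp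
      have hc := (hiff p.1 p.2.1 p.2.2).mp hp.2
      simp only [Finset.mem_coe, mem_product, mem_filter, mem_range]
      refine ⟨⟨⟨?_, ?_, ?_⟩, hc.1⟩, ⟨?_, ?_, ?_⟩, hc.2⟩
      · exact (Nat.div_lt_iff_lt_mul hK0).mpr (hbv p.1)
      · exact (Nat.div_lt_iff_lt_mul hK0).mpr (hbv p.2.1)
      · exact (Nat.div_lt_iff_lt_mul hK0).mpr (hbv p.2.2)
      · exact Nat.mod_lt _ hK0
      · exact Nat.mod_lt _ hK0
      · exact Nat.mod_lt _ hK0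
    · intro q hq
      simp only [Finset.mem_coe, mem_product, mem_filter, mem_range] at hq
      obtain ⟨⟨⟨h1, h2, h3⟩, hhs⟩, ⟨l1, l2, l3⟩, hls⟩ := hq
      have hofn : ∀ h l : ℕ, h < 2 → l < K → (BitVec.ofNat w (h * K + l)).toNat = h * K + l := by
        intro h l hh hl
        rw [BitVec.toNat_ofNat, h2w]
        apply Nat.mod_eq_of_lt
        interval_cases h <;> omega
      have hdiv : ∀ h l : ℕ, h < 2 → l < K → (h * K + l) / K = h := by
        intro h l hh hl
        rw [mul_comm, Nat.mul_add_div hK0, Nat.div_eq_of_lt hl, Nat.add_zero]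
      have hmod : ∀ h l : ℕ, h < 2 → l < K → (h * K + l) % K = l := by
        intro h l hh hl
        rw [mul_comm, Nat.mul_add_mod, Nat.mod_eq_of_lt hl]
      rw [Finset.mem_coe, mem_filter]
      refine ⟨mem_univ _, ?_⟩
      rw [hiff]
      rw [hofn _ _ h1 l1, hofn _ _ h2 l2, hofn _ _ h3 l3,
        hdiv _ _ h1 l1, hdiv _ _ h2 l2, hdiv _ _ h3 l3,
        hmod _ _ h1 l1, hmod _ _ h2 l2, hmod _ _ h3 l3]
      exact ⟨hhs, hls⟩
    · intro p hp
      have he : ∀ a : BitVec w, BitVec.ofNat w (a.toNat / K * K + a.toNat % K) = a := by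
        intro a
        rw [Nat.div_add_mod', BitVec.ofNat_toNat, BitVec.setWidth_eq]
      exact Prod.ext (he p.1) (Prod.ext (he p.2.1) (he p.2.2))
    · intro q hq
      simp only [Finset.mem_coe, mem_product, mem_filter, mem_range] at hq
      obtain ⟨⟨⟨h1, h2, h3⟩, hhs⟩, ⟨l1, l2, l3⟩, hls⟩ := hq
      have hofn : ∀ h l : ℕ, h < 2 → l < K → (BitVec.ofNat w (h * K + l)).toNat = h * K + l := by
        intro h l hh hl
        rw [BitVec.toNat_ofNat, h2w]
        apply Nat.mod_eq_of_lt
        interval_cases h <;> omega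
      have hdiv : ∀ h l : ℕ, h < 2 → l < K → (h * K + l) / K = h := by
        intro h l hh hl
        rw [mul_comm, Nat.mul_add_div hK0, Nat.div_eq_of_lt hl, Nat.add_zero]
      have hmod : ∀ h l : ℕ, h < 2 → l < K → (h * K + l) % K = l := by
        intro h l hh hl
        rw [mul_comm, Nat.mul_add_mod, Nat.mod_eq_of_lt hl]
      refine Prod.ext (Prod.ext ?_ (Prod.ext ?_ ?_)) (Prod.ext ?_ (Prod.ext ?_ ?_)) <;>
        simp only []
      · rw [hofn _ _ h1 l1, hdiv _ _ h1 l1]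
      · rw [hofn _ _ h2 l2, hdiv _ _ h2 l2]
      · rw [hofn _ _ h3 l3, hdiv _ _ h3 l3]
      · rw [hofn _ _ h1 l1, hmod _ _ h1 l1]
      · rw [hofn _ _ h2 l2, hmod _ _ h2 l2]
      · rw [hofn _ _ h3 l3, hmod _ _ h3 l3]
  have hb : ((range 2 ×ˢ range 2 ×ˢ range 2).filter
      (fun q => q.1 + q.2.1 + q.2.2 ≤ 1)).card = 4 := by decide
  rw [hcard, Finset.card_product, bigcount K hK, hb]

lemma main_count_r2 (w : ℕ) (hw : 2 ≤ w) :
    (Finset.univ.filter (fun p : BitVec w × BitVec w × BitVec w =>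
        p.1.rotateLeft (w-1) + p.2.1.rotateLeft (w-1) + p.2.2.rotateLeft (w-1) =
          (p.1 + p.2.1 + p.2.2).rotateLeft (w-1))).card
    = 4 * ((2 ^ (w-1) + 2).choose 3 + (2 ^ (w-1)).choose 3) := by
  set K := 2 ^ (w - 1) with hKdef
  have hK : 2 ≤ K := by
    rw [hKdef]
    calc 2 = 2 ^ 1 := rfl
    _ ≤ 2 ^ (w - 1) := Nat.pow_le_pow_right (by norm_num) (by omega)
  have hK0 : 0 < K := by omega
  have h2w : 2 ^ w = K * 2 := by
    rw [hKdef, ← pow_succ]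
    congr 1
    omega
  have hbv : ∀ a : BitVec w, a.toNat < K * 2 := by
    intro a; rw [← h2w]; exact a.isLt
  have hiff : ∀ a b c : BitVec w,
      (a.rotateLeft (w-1) + b.rotateLeft (w-1) + c.rotateLeft (w-1)
        = (a + b + c).rotateLeft (w-1)) ↔
      (a.toNat % 2 + b.toNat % 2 + c.toNat % 2 ≤ 1 ∧
        (a.toNat / 2 + b.toNat / 2 + c.toNat / 2 < K ∨
          2 * K ≤ a.toNat / 2 + b.toNat / 2 + c.toNat / 2)) := by
    intro a b c
    have h1 := bv_eq_iff (w-1) (by omega) (by omega) a b c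
    rw [show w - (w - 1) = 1 by omega, pow_one, ← hKdef, h2w] at h1
    have hsum : a.toNat + b.toNat + c.toNat
        = (a.toNat / 2 + b.toNat / 2 + c.toNat / 2) * 2
          + (a.toNat % 2 + b.toNat % 2 + c.toNat % 2) := by omega
    rw [hsum] at h1
    have hL : a.toNat % 2 + b.toNat % 2 + c.toNat % 2 ≤ 3 := by omega
    have hH : a.toNat / 2 + b.toNat / 2 + c.toNat / 2 < 3 * K := by
      have h1 := hbv a; have h2 := hbv b; have h3 := hbv c; omega
    exact h1.trans (key2 K _ _ hK hL hH)
  have hcard : (Finset.univ.filter (fun p : BitVec w × BitVec w × BitVec w =>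
        p.1.rotateLeft (w-1) + p.2.1.rotateLeft (w-1) + p.2.2.rotateLeft (w-1) =
          (p.1 + p.2.1 + p.2.2).rotateLeft (w-1))).card
      = (((range K ×ˢ range K ×ˢ range K).filter
            (fun q => q.1 + q.2.1 + q.2.2 < K ∨ 2 * K ≤ q.1 + q.2.1 + q.2.2)) ×ˢ
          ((range 2 ×ˢ range 2 ×ˢ range 2).filter
            (fun q => q.1 + q.2.1 + q.2.2 ≤ 1))).card := by
    apply Finset.card_nbij'
      (i := fun p => ((p.1.toNat / 2, p.2.1.toNat / 2, p.2.2.toNat / 2),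
        (p.1.toNat % 2, p.2.1.toNat % 2, p.2.2.toNat % 2)))
      (j := fun q => (BitVec.ofNat w (q.1.1 * 2 + q.2.1),
        BitVec.ofNat w (q.1.2.1 * 2 + q.2.2.1), BitVec.ofNat w (q.1.2.2 * 2 + q.2.2.2)))
    · intro p hp
      rw [Finset.mem_coe, mem_filter] at hp
      have hc := (hiff p.1 p.2.1 p.2.2).mp hp.2
      have b1 := hbv p.1; have b2 := hbv p.2.1; have b3 := hbv p.2.2
      simp only [Finset.mem_coe, mem_product, mem_filter, mem_range]
      refine ⟨⟨⟨?_, ?_, ?_⟩, hc.2⟩, ⟨?_, ?_, ?_⟩, hc.1⟩ <;> omega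
    · intro q hq
      simp only [Finset.mem_coe, mem_product, mem_filter, mem_range] at hq
      obtain ⟨⟨⟨h1, h2, h3⟩, hhs⟩, ⟨l1, l2, l3⟩, hls⟩ := hq
      have hofn : ∀ h l : ℕ, h < K → l < 2 → (BitVec.ofNat w (h * 2 + l)).toNat = h * 2 + l := by
        intro h l hh hl
        rw [BitVec.toNat_ofNat, h2w]
        apply Nat.mod_eq_of_lt
        omega
      rw [Finset.mem_coe, mem_filter]
      refine ⟨mem_univ _, ?_⟩
      rw [hiff]
      rw [hofn _ _ h1 l1, hofn _ _ h2 l2, hofn _ _ h3 l3]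
      have e1 : ∀ h l : ℕ, (h * 2 + l) / 2 = h + l / 2 := by intro h l; omega
      have e2 : ∀ h l : ℕ, (h * 2 + l) % 2 = l % 2 := by intro h l; omega
      rw [e1, e1, e1, e2, e2, e2,
        Nat.mod_eq_of_lt l1, Nat.mod_eq_of_lt l2, Nat.mod_eq_of_lt l3,
        Nat.div_eq_of_lt l1, Nat.div_eq_of_lt l2, Nat.div_eq_of_lt l3]
      simp only [Nat.add_zero]
      exact ⟨hls, hhs⟩
    · intro p hp
      have he : ∀ a : BitVec w, BitVec.ofNat w (a.toNat / 2 * 2 + a.toNat % 2) = a := by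
        intro a
        rw [Nat.div_add_mod', BitVec.ofNat_toNat, BitVec.setWidth_eq]
      exact Prod.ext (he p.1) (Prod.ext (he p.2.1) (he p.2.2))
    · intro q hq
      simp only [Finset.mem_coe, mem_product, mem_filter, mem_range] at hq
      obtain ⟨⟨⟨h1, h2, h3⟩, hhs⟩, ⟨l1, l2, l3⟩, hls⟩ := hq
      have hofn : ∀ h l : ℕ, h < K → l < 2 → (BitVec.ofNat w (h * 2 + l)).toNat = h * 2 + l := by
        intro h l hh hl
        rw [BitVec.toNat_ofNat, h2w]
        apply Nat.mod_eq_of_lt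
        omega
      refine Prod.ext (Prod.ext ?_ (Prod.ext ?_ ?_)) (Prod.ext ?_ (Prod.ext ?_ ?_)) <;>
        simp only []
      · rw [hofn _ _ h1 l1]; omega
      · rw [hofn _ _ h2 l2]; omega
      · rw [hofn _ _ h3 l3]; omega
      · rw [hofn _ _ h1 l1]; omega
      · rw [hofn _ _ h2 l2]; omega
      · rw [hofn _ _ h3 l3]; omega
  have hb : ((range 2 ×ˢ range 2 ×ˢ range 2).filter
      (fun q => q.1 + q.2.1 + q.2.2 ≤ 1)).card = 4 := by decide
  rw [hcard, Finset.card_product, bigcount K hK, hb]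
  ring

lemma two_mul_choose_two (n : ℕ) : 2 * n.choose 2 = n * (n - 1) := by
  induction n with
  | zero => rfl
  | succ m ih =>
    rw [Nat.choose_succ_succ m 1, Nat.choose_one_right, Nat.mul_add, ih]
    cases m with
    | zero => rfl
    | succ k =>
      simp only [Nat.add_sub_cancel]
      ring
lemma six_mul_choose_three (n : ℕ) : 6 * n.choose 3 = n * (n - 1) * (n - 2) := by
  induction n with
  | zero => rfl
  | succ m ih =>
    rw [Nat.choose_succ_succ m 2, Nat.mul_add, ih]
    have h2 : 6 * m.choose 2 = 3 * (m * (m - 1)) := by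
      rw [show (6 : ℕ) = 3 * 2 by rfl, Nat.mul_assoc, two_mul_choose_two]
    rw [h2]
    cases m with
    | zero => rfl
    | succ k =>
      cases k with
      | zero => rfl
      | succ j =>
        have e1 : j + 1 + 1 - 1 = j + 1 := by omega
        have e2 : j + 1 + 1 - 2 = j := by omega
        have e3 : j + 1 + 1 + 1 - 1 = j + 1 + 1 := by omega
        have e4 : j + 1 + 1 + 1 - 2 = j + 1 := by omega
        rw [e1, e2, e3, e4]
        ring

lemma final_nat (w : ℕ) (hw : 2 ≤ w) :
    3 * (4 * ((2 ^ (w-1) + 2).choose 3 + (2 ^ (w-1)).choose 3))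
      = 2 ^ (w + 2) * (2 ^ (2 * w - 3) + 1) := by
  obtain ⟨K, hKdef⟩ : ∃ K, K = 2 ^ (w - 1) := ⟨_, rfl⟩
  rw [← hKdef]
  have hK : 2 ≤ K := by
    rw [hKdef]
    calc 2 = 2 ^ 1 := rfl
    _ ≤ 2 ^ (w - 1) := Nat.pow_le_pow_right (by norm_num) (by omega)
  have h6a : 6 * (K + 2).choose 3 = (K + 2) * (K + 1) * K := by
    rw [six_mul_choose_three]
    congr 2 <;> omega
  have h6b : 6 * K.choose 3 = K * (K - 1) * (K - 2) := six_mul_choose_three K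
  have hP : (K + 2) * (K + 1) * K + K * (K - 1) * (K - 2) = 2 * (K * K * K) + 4 * K := by
    obtain ⟨k, rfl⟩ : ∃ k, K = k + 2 := ⟨K - 2, by omega⟩
    have a1 : k + 2 - 1 = k + 1 := by omega
    have a2 : k + 2 - 2 = k := by omega
    rw [a1, a2]
    ring
  have hL : 3 * (4 * ((K + 2).choose 3 + K.choose 3))
      = 2 * (6 * (K + 2).choose 3) + 2 * (6 * K.choose 3) := by ring
  rw [hL, h6a, h6b]
  have hLL : 2 * ((K + 2) * (K + 1) * K) + 2 * (K * (K - 1) * (K - 2))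
      = 4 * (K * K * K) + 8 * K := by
    calc 2 * ((K + 2) * (K + 1) * K) + 2 * (K * (K - 1) * (K - 2))
        = 2 * ((K + 2) * (K + 1) * K + K * (K - 1) * (K - 2)) := by ring
    _ = 2 * (2 * (K * K * K) + 4 * K) := by rw [hP]
    _ = 4 * (K * K * K) + 8 * K := by ring
  rw [hLL]
  have e1 : 4 * (K * K * K) = 2 ^ (3 * w - 1) := by
    rw [hKdef, show (4 : ℕ) = 2 ^ 2 by rfl, ← pow_add, ← pow_add, ← pow_add]
    congr 1
    omega
  have e2 : 8 * K = 2 ^ (w + 2) := by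
    rw [hKdef, show (8 : ℕ) = 2 ^ 3 by rfl, ← pow_add]
    congr 1
    omega
  have hR : 2 ^ (w + 2) * (2 ^ (2 * w - 3) + 1) = 2 ^ (3 * w - 1) + 2 ^ (w + 2) := by
    rw [Nat.mul_add, Nat.mul_one, ← pow_add]
    congr 2
    omega
  rw [e1, e2, hR]


theorem rotational_probability_three_addends_extreme_r
    (w : ℕ) (hw : 2 ≤ w) (r : ℕ) (hr : r = 1 ∨ r = w - 1)
    (N : ℕ)
    (hN : N = (Finset.univ.filter (fun p : BitVec w × BitVec w × BitVec w =>
        p.1.rotateLeft r + p.2.1.rotateLeft r + p.2.2.rotateLeft r =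
          (p.1 + p.2.1 + p.2.2).rotateLeft r)).card) :
    (N : ℤ) = 4 * (intChoose (2 ^ (w - 1) + 2) (2 ^ (w - 1) - 1) +
        intChoose (2 ^ (w - 1)) ((2 : ℤ) ^ (w - 1) - 3)) ∧
    3 * (N : ℤ) = 2 ^ (w + 2) * (2 ^ (2 * w - 3) + 1) ∧
    (N : ℚ) / 2 ^ (3 * w) = 4 * ((2 : ℚ) ^ (2 * w - 3) + 1) / (3 * 2 ^ (2 * w)) := by
  have hNc : N = 4 * ((2 ^ (w-1) + 2).choose 3 + (2 ^ (w-1)).choose 3) := by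
    rcases hr with h | h
    · rw [hN, h]; exact main_count_r1 w hw
    · rw [hN, h]; exact main_count_r2 w hw
  obtain ⟨K, hKdef⟩ : ∃ K, K = 2 ^ (w - 1) := ⟨_, rfl⟩
  rw [← hKdef] at hNc
  have hK : 2 ≤ K := by
    rw [hKdef]
    calc 2 = 2 ^ 1 := rfl
    _ ≤ 2 ^ (w - 1) := Nat.pow_le_pow_right (by norm_num) (by omega)
  have h3N : 3 * N = 2 ^ (w + 2) * (2 ^ (2 * w - 3) + 1) := by
    rw [hNc]
    have := final_nat w hw
    rw [← hKdef] at this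
    exact this
  have hcastK : ((2 : ℤ) ^ (w - 1)) = (K : ℤ) := by rw [hKdef]; push_cast; ring
  refine ⟨?_, ?_, ?_⟩
  · rw [hNc, hcastK]
    have hi1 : intChoose ((K : ℤ) + 2) ((K : ℤ) - 1) = ((K + 2).choose 3 : ℤ) := by
      rw [intChoose, if_pos (by omega : (0:ℤ) ≤ (K : ℤ) - 1)]
      have t1 : ((K : ℤ) + 2).toNat = K + 2 := by omega
      have t2 : ((K : ℤ) - 1).toNat = K - 1 := by omega
      rw [t1, t2, show K - 1 = (K + 2) - 3 by omega, Nat.choose_symm (by omega)]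
    have hi2 : intChoose (K : ℤ) ((K : ℤ) - 3) = (K.choose 3 : ℤ) := by
      by_cases h3 : 3 ≤ K
      · rw [intChoose, if_pos (by omega : (0:ℤ) ≤ (K : ℤ) - 3)]
        have t1 : ((K : ℤ)).toNat = K := by omega
        have t2 : ((K : ℤ) - 3).toNat = K - 3 := by omega
        rw [t1, t2, show K - 3 = K - 3 from rfl, ← Nat.choose_symm (h3)]
      · have hK2 : K = 2 := by omega
        rw [intChoose, if_neg (by omega : ¬ (0:ℤ) ≤ (K : ℤ) - 3), hK2]
        norm_num [Nat.choose_eq_zero_of_lt]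
    rw [hi1, hi2]
    push_cast
    ring
  · exact_mod_cast h3N
  · have hq : (3 : ℚ) * N = 2 ^ (w + 2) * (2 ^ (2 * w - 3) + 1) := by
      exact_mod_cast h3N
    rw [div_eq_div_iff (by positivity) (by positivity)]
    linear_combination (2 ^ (2 * w) : ℚ) * hq
end

section
/- Let w ≥ 2 and define, for 1 ≤ q ≤ w−1, F(q, 3, w) = Σ_{h=0}^{⌊3(2^q − 1)/2^w⌋} Σ_{j=0}^{3} (−1)^j C(3, j) [ C(h·2^w − (j−1)·2^q − 1 + 3, h·2^w − (j−1)·2^q − 1) − C(h·2^w − j·2^q − 1 + 3, h·2^w − j·2^q − 1) ], where binomial coefficients with negative lower argument are 0. Then F(1, 3, w) = 4 and F(w−1, 3, w) = C(2^(w−1) + 2, 2^(w−1) − 1) + C(2^(w−1), 2^(w−1) − 3), while for 2 ≤ q ≤ w−2 one has F(q, 3, w) = C(2^q + 2, 2^q − 1). -/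
lemma intChoose_neg {n m : ℤ} (h : m < 0) : intChoose n m = 0 := by
  simp [intChoose, not_le.mpr h]

lemma choose_nat_cubic (n : ℕ) : 6 * (n+3).choose n = (n+1)*(n+2)*(n+3) := by
  rw [← Nat.choose_symm (by omega : n ≤ n+3)]
  simp only [Nat.add_sub_cancel_left]
  have h3 := Nat.add_one_mul_choose_eq (n+2) 2
  have h2 := Nat.add_one_mul_choose_eq (n+1) 1
  have h1 := Nat.add_one_mul_choose_eq n 0
  simp [Nat.choose] at *
  nlinarith [h1, h2, h3]

lemma intChoose_cubic (m : ℤ) (hm : 0 ≤ m) :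
    6 * intChoose (m+3) m = (m+1)*(m+2)*(m+3) := by
  obtain ⟨n, rfl⟩ := Int.eq_ofNat_of_zero_le hm
  rw [intChoose, if_pos hm]
  have h1 : ((n:ℤ)+3).toNat = n + 3 := by omega
  have h2 : ((n:ℤ)).toNat = n := by omega
  rw [h1, h2]
  have h := choose_nat_cubic n
  have : (6 : ℤ) * (n+3).choose n = ((n:ℤ)+1)*((n:ℤ)+2)*((n:ℤ)+3) := by
    exact_mod_cast congrArg (Nat.cast : ℕ → ℤ) h
  linarith

lemma Fcount_one (w : ℕ) (hw : 2 ≤ w) : Fcount 1 3 w = 4 := by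
  have hb : 3 * (2 ^ 1 - 1) / 2 ^ w = 0 := by
    apply Nat.div_eq_of_lt
    have : 2^2 ≤ 2^w := Nat.pow_le_pow_right (by norm_num) hw
    omega
  rw [Fcount, hb, Finset.sum_range_one]
  rw [Finset.sum_range_succ, Finset.sum_range_succ, Finset.sum_range_succ, Finset.sum_range_one]
  norm_num [intChoose]

lemma Fcount_top (w : ℕ) (hw : 3 ≤ w) :
    Fcount (w - 1) 3 w =
      intChoose (2 ^ (w - 1) + 2) (2 ^ (w - 1) - 1) +
        intChoose (2 ^ (w - 1)) ((2 : ℤ) ^ (w - 1) - 3) := by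
  have ha : 4 ≤ 2 ^ (w-1) := by
    calc 4 = 2^2 := by norm_num
    _ ≤ 2^(w-1) := Nat.pow_le_pow_right (by norm_num) (by omega)
  have hwa : 2 ^ w = 2 * 2 ^ (w-1) := by
    conv_lhs => rw [show w = (w-1)+1 by omega, pow_succ]
    exact Nat.mul_comm _ _
  have hb : 3 * (2 ^ (w-1) - 1) / 2 ^ w = 1 := by
    rw [hwa]
    apply Nat.div_eq_of_lt_le <;> omega
  have haz : (4:ℤ) ≤ (2:ℤ)^(w-1) := by exact_mod_cast Nat.cast_le.mpr ha
  have hwaz : (2:ℤ) ^ w = 2 * 2 ^ (w-1) := by exact_mod_cast hwa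
  set a : ℤ := (2:ℤ)^(w-1) with hadef
  rw [Fcount, hb]
  rw [Finset.sum_range_succ, Finset.sum_range_one]
  rw [Finset.sum_range_succ, Finset.sum_range_succ, Finset.sum_range_succ, Finset.sum_range_one,
      Finset.sum_range_succ, Finset.sum_range_succ, Finset.sum_range_succ, Finset.sum_range_one]
  norm_num [hwaz]
  simp only [← hadef]
  rw [intChoose_neg (show (-1:ℤ) < 0 by norm_num),
      intChoose_neg (show (-a - 1) < 0 by linarith),
      intChoose_neg (show (-(2*a) - 1) < 0 by linarith),
      intChoose_neg (show (-(3*a) - 1) < 0 by linarith),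
      intChoose_neg (show (2*a - 3*a - 1) < 0 by linarith),
      show 2*a + a - 1 + 3 = 3*a + 2 by ring,
      show 2*a + a - 1 = 3*a - 1 by ring,
      show 2*a - 1 + 3 = 2*a + 2 by ring,
      show 2*a - a - 1 + 3 = a + 2 by ring,
      show 2*a - a - 1 = a - 1 by ring,
      show a - 1 + 3 = a + 2 by ring]
  have e1 : 6 * intChoose (a + 2) (a - 1) = a*(a+1)*(a+2) := by
    have := intChoose_cubic (a-1) (by linarith)
    rw [show a-1+3 = a+2 by ring] at this; linarith
  have e2 : 6 * intChoose (2*a + 2) (2*a - 1) = (2*a)*(2*a+1)*(2*a+2) := by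
    have := intChoose_cubic (2*a-1) (by linarith)
    rw [show 2*a-1+3 = 2*a+2 by ring] at this; linarith
  have e3 : 6 * intChoose (3*a + 2) (3*a - 1) = (3*a)*(3*a+1)*(3*a+2) := by
    have := intChoose_cubic (3*a-1) (by linarith)
    rw [show 3*a-1+3 = 3*a+2 by ring] at this; linarith
  have e0 : 6 * intChoose a (a - 3) = (a-2)*(a-1)*a := by
    have := intChoose_cubic (a-3) (by linarith)
    rw [show a-3+3 = a by ring] at this; linarith
  rw [intChoose_neg (show (2*a - 2*a - 1 : ℤ) < 0 by linarith)]
  apply mul_left_cancel₀ (show (6:ℤ) ≠ 0 by norm_num)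
  linear_combination e3 - 4*e2 + 6*e1 - e0

theorem Fcount_three_values (w : ℕ) (hw : 2 ≤ w) :
    Fcount 1 3 w = 4 ∧
    Fcount (w - 1) 3 w =
      intChoose (2 ^ (w - 1) + 2) (2 ^ (w - 1) - 1) +
        intChoose (2 ^ (w - 1)) ((2 : ℤ) ^ (w - 1) - 3) ∧
    ∀ q : ℕ, 2 ≤ q → q ≤ w - 2 →
      Fcount q 3 w = intChoose (2 ^ q + 2) ((2 : ℤ) ^ q - 1) := by
  refine ⟨Fcount_one w hw, ?_, ?_⟩
  · rcases eq_or_lt_of_le hw with h2 | h3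
    · subst h2
      rw [show (2:ℕ) - 1 = 1 by norm_num, Fcount_one 2 le_rfl]
      norm_num [intChoose]
    · exact Fcount_top w h3
  · intro q hq hq2
    have hqpos : (4:ℤ) ≤ (2:ℤ)^q := by
      calc (4:ℤ) = 2^2 := by norm_num
      _ ≤ 2^q := pow_le_pow_right₀ (by norm_num) hq
    have hb : 3 * (2 ^ q - 1) / 2 ^ w = 0 := by
      apply Nat.div_eq_of_lt
      have h1 : 2 ^ q ≤ 2 ^ (w - 2) := Nat.pow_le_pow_right (by norm_num) hq2
      have h2 : 2 ^ (w-2) * 4 ≤ 2 ^ w := by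
        calc 2^(w-2) * 4 = 2^(w-2+2) := by rw [pow_add]; norm_num
        _ ≤ 2^w := Nat.pow_le_pow_right (by norm_num) (by omega)
      have hp : 1 ≤ 2 ^ q := Nat.one_le_two_pow
      omega
    rw [Fcount, hb]
    rw [Finset.sum_range_one]
    rw [Finset.sum_range_succ, Finset.sum_range_succ, Finset.sum_range_succ, Finset.sum_range_one]
    norm_num
    rw [intChoose_neg (show (-1:ℤ) < 0 by norm_num),
        intChoose_neg (show (-(2:ℤ)^q - 1) < 0 by linarith),
        intChoose_neg (show (-(2*(2:ℤ)^q) - 1) < 0 by linarith),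
        intChoose_neg (show (-(3*(2:ℤ)^q) - 1) < 0 by linarith),
        show (2:ℤ)^q - 1 + 3 = 2^q + 2 by ring]
    ring
end

section
/- Let w ≥ 1, k ≥ 1, let 1 ≤ r ≤ w−1, set N = 2^(wk) and g = gcd(w, r), and let ρ be the permutation of the set A of k-tuples of w-bit words that rotates every component left by r. For a permutation Π of A, let C_Π be the number of x ∈ A with Π(ρ(x)) = ρ(Π(x)). Then the sum of C_Π over all N! permutations Π of A satisfies (N − 1) · Σ_Π C_Π = N! · (N + 2^(2kg) − 2^(kg+1)); equivalently, the expected number of rotational collisions of a uniformly random permutation of A is (2^(wk) + 2^(2k·gcd(w,r)) − 2^(k·gcd(w,r)+1)) / (2^(wk) − 1). -/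
/-- Componentwise left rotation by `r` of a `k`-tuple of `w`-bit words. -/
def rotTuple {w k : ℕ} (r : ℕ) (x : Fin k → BitVec w) : Fin k → BitVec w :=
  fun i => (x i).rotateLeft r

/-- The number of rotational collisions of a permutation `π` of the set of
`k`-tuples of `w`-bit words. -/
def rotCollisions {w k : ℕ} (r : ℕ) (π : Equiv.Perm (Fin k → BitVec w)) : ℕ :=
  (Finset.univ.filter (fun x : Fin k → BitVec w =>
      π (rotTuple r x) = rotTuple r (π x))).card

set_option linter.unusedSectionVars false


def bvOfFn : ∀ {n : ℕ}, (Fin n → Bool) → BitVec n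
  | 0, _ => 0#0
  | n+1, f => BitVec.cons (f ⟨n, Nat.lt_succ_self n⟩) (bvOfFn (fun i => f i.castSucc))

lemma getLsbD_bvOfFn : ∀ {n : ℕ} (f : Fin n → Bool) (i : ℕ) (h : i < n),
    (bvOfFn f).getLsbD i = f ⟨i, h⟩
  | 0, _, i, h => absurd h (Nat.not_lt_zero i)
  | n+1, f, i, h => by
      rw [bvOfFn, BitVec.getLsbD_cons]
      by_cases hi : i = n
      · subst hi; simp
      · have h' : i < n := by omega
        rw [if_neg hi, getLsbD_bvOfFn _ i h']
        rfl

lemma periodic_of_shift {w s : ℕ} (hw : 0 < w) (hs : 0 < s) (hsw : s < w)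
    (b : ℕ → Bool) (hb : ∀ i < w, b ((i + s) % w) = b i) :
    ∀ i < w, b i = b (i % Nat.gcd w s) := by
  set g := Nat.gcd w s with hg
  have hg0 : 0 < g := Nat.gcd_pos_of_pos_left s hw
  have key1 : ∀ t i, i < w → b ((i + t * s) % w) = b i := by
    intro t
    induction t with
    | zero => intro i hi; simp [Nat.mod_eq_of_lt hi]
    | succ t ih =>
      intro i hi
      have h1 : (i + (t+1) * s) % w = (((i + t * s) % w) + s) % w := by
        rw [Nat.mod_add_mod]; congr 1; ring
      rw [h1, hb _ (Nat.mod_lt _ hw), ih i hi]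
  obtain ⟨t, ht⟩ : ∃ t : ℕ, (t * s) % w = g := by
    have hgcd : (g : ℤ) = w * Nat.gcdA w s + s * Nat.gcdB w s := Nat.gcd_eq_gcd_ab w s
    refine ⟨((Nat.gcdB w s) % (w : ℤ)).toNat, ?_⟩
    have hw' : (0:ℤ) < (w:ℤ) := by exact_mod_cast hw
    have hnn : (0:ℤ) ≤ Nat.gcdB w s % w := Int.emod_nonneg _ (by omega)
    have hcast : ((((Nat.gcdB w s) % w).toNat : ℤ)) = Nat.gcdB w s % w :=
      Int.toNat_of_nonneg hnn
    have hglt : g < w := lt_of_le_of_lt (Nat.gcd_le_right w hs) hsw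
    have hint : ((((Nat.gcdB w s) % w).toNat * s : ℕ) : ℤ) % w = (g : ℤ) := by
      push_cast [hcast]
      rw [Int.mul_emod, Int.emod_emod_of_dvd _ dvd_rfl, ← Int.mul_emod]
      have hBs : (Nat.gcdB w s) * s = (g:ℤ) - w * Nat.gcdA w s := by rw [hgcd]; ring
      rw [hBs]
      rw [Int.sub_emod, Int.mul_emod_right]
      simp
      exact Int.emod_eq_of_lt (by positivity) (by exact_mod_cast hglt)
    have h2 : ((((Nat.gcdB w s) % w).toNat * s : ℕ) % w : ℕ) = ((g : ℕ)) := by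
      have := hint
      rw [← Int.natCast_mod] at this
      exact_mod_cast this
    exact h2
  have key2 : ∀ i, i < w → b ((i + g) % w) = b i := by
    intro i hi
    have h1 : (i + g) % w = (i + t * s) % w := by
      conv_lhs => rw [← ht]
      exact Nat.add_mod_mod i (t*s) w
    rw [h1, key1 t i hi]
  have key3 : ∀ q i, i < w → b ((i + q * g) % w) = b i := by
    intro q
    induction q with
    | zero => intro i hi; simp [Nat.mod_eq_of_lt hi]
    | succ q ih =>
      intro i hi
      have h1 : (i + (q+1) * g) % w = (((i + q * g) % w) + g) % w := by
        rw [Nat.mod_add_mod]; congr 1; ring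
      rw [h1, key2 _ (Nat.mod_lt _ hw), ih i hi]
  intro i hi
  have h1 : i % g < w := lt_of_le_of_lt (Nat.mod_le i g) hi
  have h2 := key3 (i / g) (i % g) h1
  rw [show i % g + i / g * g = i by rw [mul_comm]; exact Nat.mod_add_div i g,
    Nat.mod_eq_of_lt hi] at h2
  exact h2
lemma rotateLeft_getLsbD_eq {w r : ℕ} (hw : 1 ≤ w) (hr : 1 ≤ r) (hrw : r ≤ w - 1)
    (x : BitVec w) (i : ℕ) (hi : i < w) :
    (x.rotateLeft r).getLsbD i = x.getLsbD ((i + (w - r)) % w) := by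
  have hrw' : r < w := by omega
  rw [BitVec.getLsbD_rotateLeft, Nat.mod_eq_of_lt hrw']
  by_cases h : i < r
  · have hlt : i + (w - r) < w := by omega
    rw [Nat.mod_eq_of_lt hlt]
    simp only [h, decide_true, cond_true]
    congr 1
    omega
  · have : (i + (w - r)) % w = i - r := by
      rw [show i + (w - r) = (i - r) + w by omega, Nat.add_mod_right,
        Nat.mod_eq_of_lt (by omega)]
    rw [this]
    simp only [h, decide_false, cond_false, hi, decide_true, Bool.true_and]

lemma rot_fixed_iff {w r : ℕ} (hw : 1 ≤ w) (hr : 1 ≤ r) (hrw : r ≤ w - 1) (x : BitVec w) :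
    x.rotateLeft r = x ↔ ∀ i < w, x.getLsbD i = x.getLsbD (i % Nat.gcd w (w - r)) := by
  have hs : 0 < w - r := by omega
  have hsw : w - r < w := by omega
  have hgw : Nat.gcd w (w - r) ∣ w := Nat.gcd_dvd_left _ _
  have hgs : Nat.gcd w (w - r) ∣ (w - r) := Nat.gcd_dvd_right _ _
  have hg0 : 0 < Nat.gcd w (w - r) := Nat.gcd_pos_of_pos_left _ (by omega)
  constructor
  · intro hfix i hi
    refine periodic_of_shift (by omega) hs hsw (fun j => x.getLsbD j) ?_ i hi
    intro j hj
    have h := rotateLeft_getLsbD_eq hw hr hrw x j hj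
    rw [hfix] at h
    exact h.symm
  · intro hper
    apply BitVec.eq_of_getLsbD_eq
    intro i hi
    rw [rotateLeft_getLsbD_eq hw hr hrw x i hi]
    have h1 : (i + (w - r)) % w < w := Nat.mod_lt _ (by omega)
    rw [hper _ h1, hper i hi]
    congr 1
    rw [Nat.mod_mod_of_dvd _ hgw, Nat.add_mod]
    rw [Nat.mod_eq_zero_of_dvd hgs, add_zero, Nat.mod_eq_of_lt (Nat.mod_lt _ hg0)]

lemma card_rot_fixed {w r : ℕ} (hw : 1 ≤ w) (hr : 1 ≤ r) (hrw : r ≤ w - 1) :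
    Fintype.card {x : BitVec w // x.rotateLeft r = x} = 2 ^ Nat.gcd w r := by
  have hgg : Nat.gcd w (w - r) = Nat.gcd w r := by
    apply Nat.dvd_antisymm
    · apply Nat.dvd_gcd (Nat.gcd_dvd_left _ _)
      have h1 := Nat.gcd_dvd_left w (w - r)
      have h2 := Nat.gcd_dvd_right w (w - r)
      have h3 := Nat.dvd_sub h1 h2
      have hrr : w - (w - r) = r := by omega
      rwa [hrr] at h3
    · apply Nat.dvd_gcd (Nat.gcd_dvd_left _ _)
      exact Nat.dvd_sub (Nat.gcd_dvd_left w r) (Nat.gcd_dvd_right w r)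
  set g := Nat.gcd w (w - r) with hgdef
  have hg0 : 0 < g := Nat.gcd_pos_of_pos_left _ (by omega)
  have hgw : g ≤ w := Nat.le_of_dvd (by omega) (Nat.gcd_dvd_left _ _)
  have e : {x : BitVec w // x.rotateLeft r = x} ≃ (Fin g → Bool) :=
    { toFun := fun x j => (x : BitVec w).getLsbD (j : ℕ)
      invFun := fun f =>
        ⟨bvOfFn (fun i : Fin w => f ⟨(i : ℕ) % g, Nat.mod_lt _ hg0⟩), by
          rw [rot_fixed_iff hw hr hrw]
          intro i hi
          rw [getLsbD_bvOfFn _ i hi, getLsbD_bvOfFn _ (i % g)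
            (lt_of_le_of_lt (Nat.mod_le i g) hi)]
          congr 1
          exact Fin.ext (by simp [Nat.mod_eq_of_lt (Nat.mod_lt i hg0)])⟩
      left_inv := by
        rintro ⟨x, hx⟩
        apply Subtype.ext
        apply BitVec.eq_of_getLsbD_eq
        intro i hi
        rw [getLsbD_bvOfFn _ i hi]
        exact ((rot_fixed_iff hw hr hrw x).mp hx i hi).symm
      right_inv := by
        intro f
        funext j
        simp only
        rw [getLsbD_bvOfFn _ (j : ℕ) (lt_of_lt_of_le j.isLt hgw)]
        congr 1
        exact Fin.ext (by simp [Nat.mod_eq_of_lt j.isLt]) }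
  rw [Fintype.card_congr e, Fintype.card_fun, Fintype.card_fin, Fintype.card_bool, ← hgg]


lemma card_rotTuple_fixed {w k r : ℕ} (hw : 1 ≤ w) (hr : 1 ≤ r) (hrw : r ≤ w - 1) :
    (Finset.univ.filter fun x : Fin k → BitVec w => rotTuple r x = x).card
      = 2 ^ (k * Nat.gcd w r) := by
  rw [← Fintype.card_subtype]
  have e : {x : Fin k → BitVec w // rotTuple r x = x}
      ≃ (Fin k → {a : BitVec w // a.rotateLeft r = a}) :=
    (Equiv.subtypeEquivRight (fun x => by
      simp [rotTuple, funext_iff])).trans Equiv.subtypePiEquivPi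
  rw [Fintype.card_congr e, Fintype.card_fun, card_rot_fixed hw hr hrw, Fintype.card_fin,
    ← pow_mul, mul_comm]

section PermCount

variable {β : Type*} [DecidableEq β] [Fintype β]

open Finset Equiv

lemma exists_perm_two {a b c d : β} (hab : a ≠ b) (hcd : c ≠ d) :
    ∃ π : Equiv.Perm β, π a = c ∧ π b = d := by
  refine ⟨(Equiv.swap (Equiv.swap a c b) d) * (Equiv.swap a c), ?_, ?_⟩
  · rw [Equiv.Perm.mul_apply, Equiv.swap_apply_left]
    refine Equiv.swap_apply_of_ne_of_ne ?_ hcd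
    intro h
    have h2 := congrArg (Equiv.swap a c) h
    rw [Equiv.swap_apply_right, Equiv.swap_apply_self] at h2
    exact hab h2
  · rw [Equiv.Perm.mul_apply]
    exact Equiv.swap_apply_left _ _

lemma card_fiber_one (a c c' : β) :
    (Finset.univ.filter fun π : Equiv.Perm β => π a = c).card
      = (Finset.univ.filter fun π : Equiv.Perm β => π a = c').card := by
  rw [← Fintype.card_subtype, ← Fintype.card_subtype]
  refine Fintype.card_congr
    ⟨fun π => ⟨Equiv.swap c c' * π.1, by
        simp [Equiv.Perm.mul_apply, π.2, Equiv.swap_apply_left]⟩,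
      fun π => ⟨Equiv.swap c c' * π.1, by
        simp [Equiv.Perm.mul_apply, π.2, Equiv.swap_apply_right]⟩, ?_, ?_⟩ <;>
    · rintro ⟨π, hπ⟩
      apply Subtype.ext
      simp [← mul_assoc, Equiv.swap_mul_self]

lemma card_perm_fix_one (a c : β) :
    (Finset.univ.filter fun π : Equiv.Perm β => π a = c).card
      = (Fintype.card β - 1).factorial := by
  have : Nonempty β := ⟨a⟩
  obtain ⟨m, hm⟩ : ∃ m, Fintype.card β = m + 1 :=
    ⟨Fintype.card β - 1, by have := Fintype.card_pos (α := β); omega⟩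
  have hsum : (Finset.univ : Finset (Equiv.Perm β)).card
      = ∑ c' : β, (Finset.univ.filter fun π : Equiv.Perm β => π a = c').card :=
    Finset.card_eq_sum_card_fiberwise (fun π _ => Finset.mem_univ (π a))
  rw [Finset.card_univ, Fintype.card_perm] at hsum
  have hconst : ∀ c' : β, (Finset.univ.filter fun π : Equiv.Perm β => π a = c').card
      = (Finset.univ.filter fun π : Equiv.Perm β => π a = c).card :=
    fun c' => card_fiber_one a c' c
  rw [Finset.sum_congr rfl (fun c' _ => hconst c'), Finset.sum_const, Finset.card_univ,
    smul_eq_mul, hm] at hsum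
  have h2 : (m + 1) * (Finset.univ.filter fun π : Equiv.Perm β => π a = c).card
      = (m + 1) * Nat.factorial m := by
    rw [← hsum]
    exact Nat.factorial_succ m
  rw [hm]
  simpa using Nat.eq_of_mul_eq_mul_left (Nat.succ_pos m) h2

lemma card_fiber_two {a b : β} (c d c' d' : β) (hcd : c ≠ d) (hcd' : c' ≠ d') :
    (Finset.univ.filter fun π : Equiv.Perm β => π a = c ∧ π b = d).card
      = (Finset.univ.filter fun π : Equiv.Perm β => π a = c' ∧ π b = d').card := by
  obtain ⟨π₀, h1, h2⟩ := exists_perm_two hcd hcd'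
  rw [← Fintype.card_subtype, ← Fintype.card_subtype]
  refine Fintype.card_congr
    ⟨fun π => ⟨π₀ * π.1, by
        obtain ⟨hc, hd⟩ := π.2
        simp [Equiv.Perm.mul_apply, hc, hd, h1, h2]⟩,
      fun π => ⟨π₀⁻¹ * π.1, by
        obtain ⟨hc, hd⟩ := π.2
        simp only [Equiv.Perm.mul_apply, hc, hd]
        constructor
        · rw [← h1, Equiv.Perm.inv_def, Equiv.symm_apply_apply]
        · rw [← h2, Equiv.Perm.inv_def, Equiv.symm_apply_apply]⟩, ?_, ?_⟩
  · rintro ⟨π, hπ⟩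
    apply Subtype.ext
    simp [← mul_assoc]
  · rintro ⟨π, hπ⟩
    apply Subtype.ext
    simp [← mul_assoc]

lemma card_perm_fix_two {a b : β} (c d : β) (hab : a ≠ b) (hcd : c ≠ d) :
    (Finset.univ.filter fun π : Equiv.Perm β => π a = c ∧ π b = d).card
      = (Fintype.card β - 2).factorial := by
  have hnt : Nontrivial β := ⟨a, b, hab⟩
  obtain ⟨m, hm⟩ : ∃ m, Fintype.card β = m + 2 :=
    ⟨Fintype.card β - 2, by have := Fintype.one_lt_card (α := β); omega⟩
  set t : Finset (β × β) := Finset.univ.filter (fun p : β × β => p.1 ≠ p.2) with ht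
  have hsum : (Finset.univ : Finset (Equiv.Perm β)).card
      = ∑ p ∈ t, (Finset.univ.filter fun π : Equiv.Perm β => (π a, π b) = p).card :=
    Finset.card_eq_sum_card_fiberwise (fun π _ => by
      simp only [ht, Finset.mem_coe, Finset.mem_filter, Finset.mem_univ, true_and]
      exact fun h => hab (π.injective h))
  -- rewrite fibers
  have hfib : ∀ p ∈ t, (Finset.univ.filter fun π : Equiv.Perm β => (π a, π b) = p).card
      = (Finset.univ.filter fun π : Equiv.Perm β => π a = c ∧ π b = d).card := by
    rintro ⟨c', d'⟩ hp
    simp only [ht, Finset.mem_filter, Finset.mem_univ, true_and] at hp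
    have heq : (Finset.univ.filter fun π : Equiv.Perm β => (π a, π b) = (c', d'))
        = (Finset.univ.filter fun π : Equiv.Perm β => π a = c' ∧ π b = d') := by
      ext π
      simp [Prod.ext_iff]
    rw [heq]
    exact card_fiber_two c' d' c d hp hcd
  rw [Finset.sum_congr rfl hfib, Finset.sum_const, smul_eq_mul, Finset.card_univ,
    Fintype.card_perm] at hsum
  have hcardt : t.card = (m + 2) * (m + 1) := by
    have h1 : (Finset.univ.filter (fun p : β × β => p.1 = p.2)).card = Fintype.card β := by
      rw [← Fintype.card_subtype]
      refine Fintype.card_congr ⟨fun p => p.1.1, fun x => ⟨(x, x), rfl⟩, ?_, fun x => rfl⟩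
      rintro ⟨⟨p1, p2⟩, hp⟩
      simp only at hp
      subst hp
      rfl
    have h2 := Finset.card_filter_add_card_filter_not
      (s := (Finset.univ : Finset (β × β))) (fun p : β × β => p.1 = p.2)
    rw [h1, Finset.card_univ, Fintype.card_prod, hm] at h2
    have heq : t = Finset.univ.filter (fun p : β × β => ¬ p.1 = p.2) := rfl
    rw [heq]
    have h3 : (m+2)*(m+2) = (m+2)*(m+1) + (m+2) := by ring
    omega
  rw [hcardt, hm] at hsum
  have hfact : (m + 2).factorial = (m+2) * (m+1) * m.factorial := by
    rw [Nat.factorial_succ, Nat.factorial_succ]; ring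
  rw [hfact] at hsum
  rw [hm]
  simp only [Nat.add_sub_cancel]
  have hpos : 0 < (m + 2) * (m + 1) := by positivity
  exact (Nat.eq_of_mul_eq_mul_right hpos (by linarith [hsum])).symm

end PermCount

open Finset in
lemma inner_fixed {w k r : ℕ} (hw : 1 ≤ w) (hr : 1 ≤ r) (hrw : r ≤ w - 1)
    (x : Fin k → BitVec w) (hfx : rotTuple r x = x) :
    (Finset.univ.filter fun π : Equiv.Perm (Fin k → BitVec w) =>
        π (rotTuple r x) = rotTuple r (π x)).card
      = 2 ^ (k * Nat.gcd w r) * (Fintype.card (Fin k → BitVec w) - 1).factorial := by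
  simp only [hfx]
  have hmaps : ∀ π ∈ (Finset.univ.filter fun π : Equiv.Perm (Fin k → BitVec w) =>
      π x = rotTuple r (π x)), π x ∈ (Finset.univ.filter
        fun y : Fin k → BitVec w => rotTuple r y = y) := by
    intro π hπ
    simp only [Finset.mem_filter, Finset.mem_univ, true_and] at hπ ⊢
    exact hπ.symm
  rw [Finset.card_eq_sum_card_fiberwise hmaps]
  have hfib : ∀ c ∈ (Finset.univ.filter fun y : Fin k → BitVec w => rotTuple r y = y),
      ((Finset.univ.filter fun π : Equiv.Perm (Fin k → BitVec w) =>
          π x = rotTuple r (π x)).filter fun π => π x = c).card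
        = (Fintype.card (Fin k → BitVec w) - 1).factorial := by
    intro c hc
    simp only [Finset.mem_filter, Finset.mem_univ, true_and] at hc
    have heq : ((Finset.univ.filter fun π : Equiv.Perm (Fin k → BitVec w) =>
          π x = rotTuple r (π x)).filter fun π => π x = c)
        = Finset.univ.filter fun π : Equiv.Perm (Fin k → BitVec w) => π x = c := by
      ext π
      simp only [Finset.mem_filter, Finset.mem_univ, true_and]
      constructor
      · exact fun h => h.2
      · intro h
        refine ⟨?_, h⟩
        rw [h, hc]
    rw [heq, card_perm_fix_one x c]
  rw [Finset.sum_congr rfl hfib, Finset.sum_const, smul_eq_mul,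
    card_rotTuple_fixed hw hr hrw]

open Finset in
lemma inner_nonfixed {w k r : ℕ} (hw : 1 ≤ w) (hr : 1 ≤ r) (hrw : r ≤ w - 1)
    (x : Fin k → BitVec w) (hfx : ¬ (rotTuple r x = x)) :
    (Finset.univ.filter fun π : Equiv.Perm (Fin k → BitVec w) =>
        π (rotTuple r x) = rotTuple r (π x)).card
      = (Fintype.card (Fin k → BitVec w) - 2 ^ (k * Nat.gcd w r))
          * (Fintype.card (Fin k → BitVec w) - 2).factorial := by
  have hmaps : ∀ π ∈ (Finset.univ.filter fun π : Equiv.Perm (Fin k → BitVec w) =>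
      π (rotTuple r x) = rotTuple r (π x)), π x ∈ (Finset.univ : Finset (Fin k → BitVec w)) :=
    fun π _ => Finset.mem_univ _
  rw [Finset.card_eq_sum_card_fiberwise hmaps]
  have hfib : ∀ c : Fin k → BitVec w,
      ((Finset.univ.filter fun π : Equiv.Perm (Fin k → BitVec w) =>
          π (rotTuple r x) = rotTuple r (π x)).filter fun π => π x = c).card
        = (Finset.univ.filter fun π : Equiv.Perm (Fin k → BitVec w) =>
            π x = c ∧ π (rotTuple r x) = rotTuple r c).card := by
    intro c
    congr 1
    ext π
    simp only [Finset.mem_filter, Finset.mem_univ, true_and]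
    constructor
    · rintro ⟨h1, h2⟩
      rw [h2] at h1
      exact ⟨h2, h1⟩
    · rintro ⟨h1, h2⟩
      rw [h1]
      exact ⟨h2, rfl⟩
  rw [Finset.sum_congr rfl (fun c _ => hfib c)]
  rw [← Finset.sum_filter_add_sum_filter_not Finset.univ
    (fun c : Fin k → BitVec w => rotTuple r c = c)]
  have hzero : ∀ c ∈ (Finset.univ.filter fun c : Fin k → BitVec w => rotTuple r c = c),
      (Finset.univ.filter fun π : Equiv.Perm (Fin k → BitVec w) =>
          π x = c ∧ π (rotTuple r x) = rotTuple r c).card = 0 := by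
    intro c hc
    simp only [Finset.mem_filter, Finset.mem_univ, true_and] at hc
    rw [Finset.card_eq_zero, Finset.filter_eq_empty_iff]
    rintro π - ⟨h1, h2⟩
    rw [hc, ← h1] at h2
    exact hfx (π.injective h2)
  have hval : ∀ c ∈ (Finset.univ.filter fun c : Fin k → BitVec w => ¬ rotTuple r c = c),
      (Finset.univ.filter fun π : Equiv.Perm (Fin k → BitVec w) =>
          π x = c ∧ π (rotTuple r x) = rotTuple r c).card
        = (Fintype.card (Fin k → BitVec w) - 2).factorial := by
    intro c hc
    simp only [Finset.mem_filter, Finset.mem_univ, true_and] at hc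
    exact card_perm_fix_two c (rotTuple r c) (fun h => hfx h.symm) (fun h => hc h.symm)
  rw [Finset.sum_congr rfl hzero, Finset.sum_congr rfl hval, Finset.sum_const,
    Finset.sum_const, smul_eq_mul, smul_eq_mul, mul_zero, zero_add]
  congr 2
  have h2 := Finset.card_filter_add_card_filter_not
    (s := (Finset.univ : Finset (Fin k → BitVec w)))
    (fun c : Fin k → BitVec w => rotTuple r c = c)
  rw [card_rotTuple_fixed hw hr hrw, Finset.card_univ] at h2
  omega


theorem expected_rotational_collisions_random_permutation
    (w : ℕ) (hw : 1 ≤ w) (k : ℕ) (hk : 1 ≤ k)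
    (r : ℕ) (hr : 1 ≤ r) (hrw : r ≤ w - 1)
    (N g : ℕ) (hN : N = 2 ^ (w * k)) (hg : g = Nat.gcd w r) :
    ((N : ℤ) - 1) * ∑ π : Equiv.Perm (Fin k → BitVec w), (rotCollisions r π : ℤ) =
      (Nat.factorial N : ℤ) * ((N : ℤ) + 2 ^ (2 * k * g) - 2 ^ (k * g + 1)) ∧
    (∑ π : Equiv.Perm (Fin k → BitVec w), (rotCollisions r π : ℚ)) /
        (Nat.factorial N : ℚ) =
      ((2 : ℚ) ^ (w * k) + 2 ^ (2 * k * Nat.gcd w r) - 2 ^ (k * Nat.gcd w r + 1)) /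
        ((2 : ℚ) ^ (w * k) - 1) := by
  subst hN hg
  have hcardBV : Fintype.card (BitVec w) = 2 ^ w :=
    (Fintype.card_congr ⟨BitVec.toFin, BitVec.ofFin, fun _ => rfl, fun _ => rfl⟩).trans
      (Fintype.card_fin _)
  have hcardA : Fintype.card (Fin k → BitVec w) = 2 ^ (w * k) := by
    rw [Fintype.card_fun, hcardBV, Fintype.card_fin, ← pow_mul]
  have hgw : Nat.gcd w r ≤ w := Nat.le_of_dvd (by omega) (Nat.gcd_dvd_left _ _)
  have hg1 : 1 ≤ Nat.gcd w r := Nat.gcd_pos_of_pos_left _ (by omega)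
  have hFN : 2 ^ (k * Nat.gcd w r) ≤ 2 ^ (w * k) :=
    Nat.pow_le_pow_right (by norm_num)
      (by rw [mul_comm w k]; exact Nat.mul_le_mul_left k hgw)
  have hN2 : 2 ≤ 2 ^ (w * k) := by
    calc 2 = 2 ^ 1 := rfl
    _ ≤ 2 ^ (w * k) := Nat.pow_le_pow_right (by norm_num) (by nlinarith)
  obtain ⟨m, hm⟩ : ∃ m, 2 ^ (w * k) = m + 2 := ⟨2 ^ (w * k) - 2, by omega⟩
  -- the key natural-number computation of the sum
  have hS : ∑ π : Equiv.Perm (Fin k → BitVec w), rotCollisions r π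
      = 2 ^ (k * Nat.gcd w r) * (2 ^ (k * Nat.gcd w r) * (m + 1).factorial)
        + (2 ^ (w * k) - 2 ^ (k * Nat.gcd w r))
            * ((2 ^ (w * k) - 2 ^ (k * Nat.gcd w r)) * m.factorial) := by
    have hswap : ∑ π : Equiv.Perm (Fin k → BitVec w), rotCollisions r π
        = ∑ x : Fin k → BitVec w, (Finset.univ.filter
            fun π : Equiv.Perm (Fin k → BitVec w) =>
              π (rotTuple r x) = rotTuple r (π x)).card := by
      simp only [rotCollisions, Finset.card_filter]
      exact Finset.sum_comm
    rw [hswap, ← Finset.sum_filter_add_sum_filter_not Finset.univ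
      (fun x : Fin k → BitVec w => rotTuple r x = x)]
    have hm1 : Fintype.card (Fin k → BitVec w) - 1 = m + 1 := by omega
    have hm2 : Fintype.card (Fin k → BitVec w) - 2 = m := by omega
    have hp1 : ∑ x ∈ Finset.univ.filter (fun x : Fin k → BitVec w => rotTuple r x = x),
        (Finset.univ.filter fun π : Equiv.Perm (Fin k → BitVec w) =>
          π (rotTuple r x) = rotTuple r (π x)).card
        = 2 ^ (k * Nat.gcd w r) * (2 ^ (k * Nat.gcd w r) * (m + 1).factorial) := by
      rw [Finset.sum_congr rfl (fun x hx => by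
        rw [inner_fixed hw hr hrw x
          ((Finset.mem_filter.mp hx).2), hm1])]
      rw [Finset.sum_const, smul_eq_mul, card_rotTuple_fixed hw hr hrw]
    have hp2 : ∑ x ∈ Finset.univ.filter (fun x : Fin k → BitVec w => ¬ rotTuple r x = x),
        (Finset.univ.filter fun π : Equiv.Perm (Fin k → BitVec w) =>
          π (rotTuple r x) = rotTuple r (π x)).card
        = (2 ^ (w * k) - 2 ^ (k * Nat.gcd w r))
            * ((2 ^ (w * k) - 2 ^ (k * Nat.gcd w r)) * m.factorial) := by
      rw [Finset.sum_congr rfl (fun x hx => by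
        rw [inner_nonfixed hw hr hrw x ((Finset.mem_filter.mp hx).2), hm2, hcardA])]
      rw [Finset.sum_const, smul_eq_mul]
      congr 2
      have h2 := Finset.card_filter_add_card_filter_not
        (s := (Finset.univ : Finset (Fin k → BitVec w)))
        (fun x : Fin k → BitVec w => rotTuple r x = x)
      rw [card_rotTuple_fixed hw hr hrw, Finset.card_univ, hcardA] at h2
      omega
    rw [hp1, hp2]
  -- the integer identity
  have hint : ((2 ^ (w * k) : ℤ) - 1) *
      ∑ π : Equiv.Perm (Fin k → BitVec w), (rotCollisions r π : ℤ) =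
      (Nat.factorial (2 ^ (w * k)) : ℤ) *
        ((2 ^ (w * k) : ℤ) + 2 ^ (2 * k * Nat.gcd w r) - 2 ^ (k * Nat.gcd w r + 1)) := by
    have hcast : ∑ π : Equiv.Perm (Fin k → BitVec w), (rotCollisions r π : ℤ)
        = ((∑ π : Equiv.Perm (Fin k → BitVec w), rotCollisions r π : ℕ) : ℤ) := by
      push_cast
      rfl
    rw [hcast, hS]
    have hfact : Nat.factorial (2 ^ (w * k)) = (m + 2) * ((m + 1) * m.factorial) := by
      rw [hm, Nat.factorial_succ, Nat.factorial_succ]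
    have hfact1 : (m + 1).factorial = (m + 1) * m.factorial := Nat.factorial_succ m
    have hsub : ((2 ^ (w * k) - 2 ^ (k * Nat.gcd w r) : ℕ) : ℤ)
        = (2 ^ (w * k) : ℤ) - 2 ^ (k * Nat.gcd w r) := by
      push_cast [Nat.cast_sub hFN]
      ring
    have hpow2 : (2 : ℤ) ^ (2 * k * Nat.gcd w r)
        = 2 ^ (k * Nat.gcd w r) * 2 ^ (k * Nat.gcd w r) := by
      rw [← pow_add]
      congr 1
      ring
    have hpow1 : (2 : ℤ) ^ (k * Nat.gcd w r + 1) = 2 ^ (k * Nat.gcd w r) * 2 := by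
      rw [pow_succ]
    have hmZ : ((2 : ℤ) ^ (w * k)) = (m : ℤ) + 2 := by exact_mod_cast congrArg (Nat.cast (R := ℤ)) hm
    rw [hfact, hfact1, hpow2, hpow1]
    push_cast [hsub]
    rw [hmZ]
    ring
  constructor
  · exact_mod_cast hint
  · have hQcast : ∑ π : Equiv.Perm (Fin k → BitVec w), (rotCollisions r π : ℚ)
        = ((∑ π : Equiv.Perm (Fin k → BitVec w), rotCollisions r π : ℕ) : ℚ) := by
      push_cast
      rfl
    have hQ : (((2 ^ (w * k) : ℕ) : ℚ) - 1) *
        ((∑ π : Equiv.Perm (Fin k → BitVec w), rotCollisions r π : ℕ) : ℚ) =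
        ((Nat.factorial (2 ^ (w * k)) : ℕ) : ℚ) *
          (((2 ^ (w * k) : ℕ) : ℚ) + 2 ^ (2 * k * Nat.gcd w r) - 2 ^ (k * Nat.gcd w r + 1)) := by
      have := congrArg (fun z : ℤ => (z : ℚ)) hint
      push_cast at this ⊢
      convert this using 2
    have hne1 : ((2 : ℚ) ^ (w * k) - 1) ≠ 0 := by
      have : (2 : ℚ) ≤ (2 : ℚ) ^ (w * k) := by exact_mod_cast hN2
      intro h
      nlinarith
    have hne2 : ((Nat.factorial (2 ^ (w * k)) : ℕ) : ℚ) ≠ 0 :=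
      Nat.cast_ne_zero.mpr (Nat.factorial_ne_zero _)
    rw [hQcast, div_eq_div_iff hne2 hne1]
    push_cast at hQ ⊢
    nlinarith [hQ]
end
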